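/- arXiv:0804.0407 — 3 statements merged into one kernel-verified Lean document; each statement's English description precedes it below -/
import Mathlib

section
/- Fix H \in (1/2,1) and t > 0. Then \lim_{\mu \to +\infty} \mu^{2H}\, e^{-2\mu t} \int_0^t\int_0^t e^{\mu(s_1+s_2)}\,|s_1-s_2|^{2H-2}\,ds_1\,ds_2 = \Gamma(2H-1), where \Gamma is the Gamma function. -/
open Filter intervalIntegral
open MeasureTheory Set Topology

lemma absRpow_intervalIntegrable {r : ℝ} (hr : -1 < r) (a b : ℝ) :
    IntervalIntegrable (fun u : ℝ => |u| ^ r) volume a b := by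
  suffices h : ∀ c : ℝ, IntervalIntegrable (fun u : ℝ => |u| ^ r) volume 0 c from
    (h a).symm.trans (h b)
  have hpos : ∀ c : ℝ, 0 ≤ c → IntervalIntegrable (fun u : ℝ => |u| ^ r) volume 0 c := by
    intro c hc
    rw [intervalIntegrable_iff_integrableOn_Ioc_of_le hc]
    refine (((intervalIntegrable_iff_integrableOn_Ioc_of_le hc).1
      (intervalIntegrable_rpow' hr (a := 0) (b := c))).congr_fun ?_ measurableSet_Ioc)
    intro x hx
    simp only []
    rw [abs_of_pos hx.1]
  intro c
  rcases le_or_gt 0 c with hc | hc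
  · exact hpos c hc
  · have h2 := (IntervalIntegrable.iff_comp_neg (h := enorm_ne_top)).1 (hpos (-c) (by linarith))
    simp only [abs_neg, neg_zero, neg_neg] at h2
    exact h2

lemma absSubRpow_intervalIntegrable {r : ℝ} (hr : -1 < r) (c a b : ℝ) :
    IntervalIntegrable (fun y : ℝ => |c - y| ^ r) volume a b := by
  have h := (absRpow_intervalIntegrable hr (c - a) (c - b)).comp_sub_left c
  simpa using h

lemma slice_intervalIntegrable {r : ℝ} (hr : -1 < r) (x a b : ℝ) :
    IntervalIntegrable (fun y : ℝ => Real.exp (-(x + y)) * |x - y| ^ r) volume a b :=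
  (absSubRpow_intervalIntegrable hr x a b).continuousOn_mul
    ((Real.continuous_exp.comp (by fun_prop)).continuousOn)

lemma expMulAbsRpow_intervalIntegrable {r : ℝ} (hr : -1 < r) (c a b : ℝ) :
    IntervalIntegrable (fun u : ℝ => Real.exp (c * u) * |u| ^ r) volume a b :=
  (absRpow_intervalIntegrable hr a b).continuousOn_mul
    ((Real.continuous_exp.comp (by fun_prop)).continuousOn)


noncomputable def fOU_G (A T : ℝ) : ℝ := ∫ u in (0:ℝ)..T, Real.exp (-u) * |u| ^ (A - 1)
noncomputable def fOU_K (A T : ℝ) : ℝ := ∫ u in (0:ℝ)..T, Real.exp u * |u| ^ (A - 1)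

lemma fOU_G_int (A : ℝ) (hA : 0 < A) (a b : ℝ) :
    IntervalIntegrable (fun u => Real.exp (-u) * |u| ^ (A - 1)) volume a b :=
  (absRpow_intervalIntegrable (by linarith) a b).continuousOn_mul
    ((Real.continuous_exp.comp continuous_neg).continuousOn)

lemma fOU_K_int (A : ℝ) (hA : 0 < A) (a b : ℝ) :
    IntervalIntegrable (fun u => Real.exp u * |u| ^ (A - 1)) volume a b :=
  (absRpow_intervalIntegrable (by linarith) a b).continuousOn_mul
    Real.continuous_exp.continuousOn

lemma fOU_G_cont (A : ℝ) (hA : 0 < A) : Continuous (fOU_G A) :=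
  intervalIntegral.continuous_primitive (fOU_G_int A hA) 0

lemma fOU_K_cont (A : ℝ) (hA : 0 < A) : Continuous (fOU_K A) :=
  intervalIntegral.continuous_primitive (fOU_K_int A hA) 0

lemma absRpow_continuousAt {r x : ℝ} (hx : x ≠ 0) :
    ContinuousAt (fun u : ℝ => |u| ^ r) x :=
  (Real.continuousAt_rpow_const |x| r (Or.inl (abs_ne_zero.2 hx))).comp
    continuous_abs.continuousAt

lemma fOU_G_measurable (A : ℝ) : Measurable fun u : ℝ => Real.exp (-u) * |u| ^ (A - 1) := by
  fun_prop

lemma fOU_K_measurable (A : ℝ) : Measurable fun u : ℝ => Real.exp u * |u| ^ (A - 1) := by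
  fun_prop

lemma fOU_G_deriv (A : ℝ) (hA : 0 < A) {x : ℝ} (hx : 0 < x) :
    HasDerivAt (fOU_G A) (Real.exp (-x) * |x| ^ (A - 1)) x := by
  refine intervalIntegral.integral_hasDerivAt_right (fOU_G_int A hA 0 x)
    ((fOU_G_measurable A).stronglyMeasurable.stronglyMeasurableAtFilter) ?_
  exact ((Real.continuous_exp.comp continuous_neg).continuousAt).mul
    (absRpow_continuousAt hx.ne')

lemma fOU_K_deriv (A : ℝ) (hA : 0 < A) {x : ℝ} (hx : 0 < x) :
    HasDerivAt (fOU_K A) (Real.exp x * |x| ^ (A - 1)) x := by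
  refine intervalIntegral.integral_hasDerivAt_right (fOU_K_int A hA 0 x)
    ((fOU_K_measurable A).stronglyMeasurable.stronglyMeasurableAtFilter) ?_
  exact Real.continuous_exp.continuousAt.mul (absRpow_continuousAt hx.ne')

lemma fOU_ftc (A : ℝ) (hA : 0 < A) (T : ℝ) (hT : 0 < T) :
    ∫ x in (0:ℝ)..T, Real.exp (2 * x) * fOU_G A x
      = Real.exp (2 * T) * fOU_G A T / 2 - fOU_K A T / 2 := by
  have hexp : ∀ x : ℝ, HasDerivAt (fun y : ℝ => Real.exp (2 * y)) (Real.exp (2 * x) * 2) x := by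
    intro x
    simpa using (HasDerivAt.exp ((hasDerivAt_id x).const_mul 2))
  have hderiv : ∀ x ∈ Ioo (0:ℝ) T,
      HasDerivWithinAt (fun x => Real.exp (2 * x) * fOU_G A x / 2 - fOU_K A x / 2)
        (Real.exp (2 * x) * fOU_G A x) (Ioi x) x := by
    intro x hx
    have h := (((hexp x).mul (fOU_G_deriv A hA hx.1)).div_const 2).sub
      ((fOU_K_deriv A hA hx.1).div_const 2)
    have hval : (Real.exp (2 * x) * 2 * fOU_G A x + Real.exp (2 * x) *
        (Real.exp (-x) * |x| ^ (A - 1))) / 2 - Real.exp x * |x| ^ (A - 1) / 2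
        = Real.exp (2 * x) * fOU_G A x := by
      have he : Real.exp (2 * x) * Real.exp (-x) = Real.exp x := by
        rw [← Real.exp_add]; ring_nf
      linear_combination (|x| ^ (A - 1) / 2) * he
    rw [hval] at h
    exact h.hasDerivWithinAt
  have hcont : ContinuousOn (fun x => Real.exp (2 * x) * fOU_G A x / 2 - fOU_K A x / 2)
      (Icc 0 T) := by
    apply Continuous.continuousOn
    exact (((Real.continuous_exp.comp (continuous_const.mul continuous_id)).mul
      (fOU_G_cont A hA)).div_const 2).sub ((fOU_K_cont A hA).div_const 2)
  have hint : IntervalIntegrable (fun x => Real.exp (2 * x) * fOU_G A x) volume 0 T :=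
    ((Real.continuous_exp.comp (continuous_const.mul continuous_id)).mul
      (fOU_G_cont A hA)).intervalIntegrable 0 T
  have h := intervalIntegral.integral_eq_sub_of_hasDeriv_right_of_le hT.le hcont hderiv hint
  have h0G : fOU_G A 0 = 0 := intervalIntegral.integral_same
  have h0K : fOU_K A 0 = 0 := intervalIntegral.integral_same
  rw [h, h0G, h0K]
  ring


noncomputable def fOU_f2 (A : ℝ) : ℝ × ℝ → ℝ :=
  fun p => Real.exp (-(p.1 + p.2)) * |p.1 - p.2| ^ (A - 1)

noncomputable def fOU_F2 (A : ℝ) : ℝ × ℝ → ℝ :=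
  Set.indicator {p : ℝ × ℝ | p.2 ≤ p.1} (fOU_f2 A)

lemma fOU_f2_meas (A : ℝ) : Measurable (fOU_f2 A) := by
  unfold fOU_f2; fun_prop

lemma fOU_F2_meas (A : ℝ) : Measurable (fOU_F2 A) :=
  (fOU_f2_meas A).indicator (measurableSet_le measurable_snd measurable_fst)

lemma fOU_F2_slice (A : ℝ) (x : ℝ) :
    (fun y => fOU_F2 A (x, y)) = Set.indicator (Iic x) (fun y => fOU_f2 A (x, y)) := by
  funext y
  simp [fOU_F2, Set.indicator_apply, Set.mem_setOf_eq, Set.mem_Iic]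

lemma fOU_F2_slice' (A : ℝ) (y : ℝ) :
    (fun x => fOU_F2 A (x, y)) = Set.indicator (Ici y) (fun x => fOU_f2 A (x, y)) := by
  funext x
  simp [fOU_F2, Set.indicator_apply, Set.mem_setOf_eq, Set.mem_Ici]

lemma absRpow_integral (A : ℝ) (hA : 0 < A) (c : ℝ) (hc : 0 ≤ c) :
    ∫ u in (0:ℝ)..c, |u| ^ (A - 1) = c ^ A / A := by
  have h1 : ∫ u in (0:ℝ)..c, |u| ^ (A - 1) = ∫ u in (0:ℝ)..c, u ^ (A - 1) := by
    apply intervalIntegral.integral_congr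
    intro u hu
    rw [uIcc_of_le hc] at hu
    simp only []
    rw [abs_of_nonneg hu.1]
  rw [h1, integral_rpow (Or.inl (by linarith))]
  rw [Real.zero_rpow (by linarith : A - 1 + 1 ≠ 0)]
  ring_nf

lemma fOU_inner_bound (A : ℝ) (hA : 0 < A) (hA1 : A < 1) (T x : ℝ) (hx : x ∈ Ioc (0:ℝ) T) :
    (∫ y in (0:ℝ)..T, |x - y| ^ (A - 1)) ≤ 2 * T ^ A / A := by
  have hr : (-1:ℝ) < A - 1 := by linarith
  have hxT : x ≤ T := hx.2
  have hx0 : 0 ≤ x := hx.1.le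
  have hsplit : (∫ y in (0:ℝ)..T, |x - y| ^ (A - 1))
      = (∫ y in (0:ℝ)..x, |x - y| ^ (A - 1)) + ∫ y in x..T, |x - y| ^ (A - 1) :=
    (integral_add_adjacent_intervals (absSubRpow_intervalIntegrable hr x 0 x)
      (absSubRpow_intervalIntegrable hr x x T)).symm
  have hp1 : (∫ y in (0:ℝ)..x, |x - y| ^ (A - 1)) = x ^ A / A := by
    have h := integral_comp_sub_left (a := 0) (b := x) (fun u : ℝ => |u| ^ (A - 1)) x
    simp only [sub_self, sub_zero] at h
    rw [h, absRpow_integral A hA x hx0]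
  have hp2 : (∫ y in x..T, |x - y| ^ (A - 1)) = (T - x) ^ A / A := by
    have h := integral_comp_add_right (a := 0) (b := T - x)
      (fun y : ℝ => |x - y| ^ (A - 1)) x
    simp only [zero_add, sub_add_cancel] at h
    rw [← h]
    have hfun : (fun u : ℝ => |x - (u + x)| ^ (A - 1)) = fun u : ℝ => |u| ^ (A - 1) := by
      funext u
      rw [show x - (u + x) = -u by ring, abs_neg]
    rw [hfun, absRpow_integral A hA (T - x) (by linarith)]
  rw [hsplit, hp1, hp2]
  have b1 : x ^ A ≤ T ^ A := Real.rpow_le_rpow hx0 hxT hA.le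
  have b2 : (T - x) ^ A ≤ T ^ A := Real.rpow_le_rpow (by linarith) (by linarith) hA.le
  rw [← add_div, div_le_div_iff₀ hA hA]
  nlinarith [hA.le]

lemma fOU_F2_sliceInt (A : ℝ) (hA : 0 < A) (hA1 : A < 1) (T : ℝ) (hT : 0 < T) (x : ℝ) :
    Integrable (fun y => fOU_F2 A (x, y)) (volume.restrict (Ioc 0 T)) := by
  rw [fOU_F2_slice]
  apply Integrable.indicator ?_ measurableSet_Iic
  have h := slice_intervalIntegrable (by linarith : (-1:ℝ) < A - 1) x 0 T
  rw [intervalIntegrable_iff_integrableOn_Ioc_of_le hT.le] at h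
  exact h

lemma fOU_prodInt (A : ℝ) (hA : 0 < A) (hA1 : A < 1) (T : ℝ) (hT : 0 < T) :
    Integrable (fOU_F2 A)
      ((volume.restrict (Ioc (0:ℝ) T)).prod (volume.restrict (Ioc (0:ℝ) T))) := by
  have hr : (-1:ℝ) < A - 1 := by linarith
  have hmeas : AEStronglyMeasurable (fOU_F2 A)
      ((volume.restrict (Ioc (0:ℝ) T)).prod (volume.restrict (Ioc (0:ℝ) T))) :=
    (fOU_F2_meas A).aestronglyMeasurable
  rw [integrable_prod_iff hmeas]
  constructor
  · exact ae_of_all _ (fun x => fOU_F2_sliceInt A hA hA1 T hT x)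
  · apply Integrable.mono' (integrable_const (2 * T ^ A / A))
      (((fOU_F2_meas A).norm.aestronglyMeasurable).integral_prod_right')
    filter_upwards [ae_restrict_mem measurableSet_Ioc] with x hx
    have hI1 : IntegrableOn (fun y => ‖fOU_F2 A (x, y)‖) (Ioc 0 T) volume :=
      (fOU_F2_sliceInt A hA hA1 T hT x).norm
    have hI2 : IntegrableOn (fun y => |x - y| ^ (A - 1)) (Ioc 0 T) volume := by
      have h := absSubRpow_intervalIntegrable hr x 0 T
      rwa [intervalIntegrable_iff_integrableOn_Ioc_of_le hT.le] at h
    have hmono : (∫ y in Ioc (0:ℝ) T, ‖fOU_F2 A (x, y)‖)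
        ≤ ∫ y in Ioc (0:ℝ) T, |x - y| ^ (A - 1) := by
      apply setIntegral_mono_on hI1 hI2 measurableSet_Ioc
      intro y hy
      refine le_trans (norm_indicator_le_norm_self (fOU_f2 A) (x, y)) ?_
      have hnorm : ‖fOU_f2 A (x, y)‖ = Real.exp (-(x + y)) * |x - y| ^ (A - 1) := by
        simp only [fOU_f2, Real.norm_eq_abs, abs_mul]
        rw [abs_of_pos (Real.exp_pos _), abs_of_nonneg (Real.rpow_nonneg (abs_nonneg _) _)]
      rw [hnorm]
      calc Real.exp (-(x + y)) * |x - y| ^ (A - 1)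
          ≤ 1 * |x - y| ^ (A - 1) :=
            mul_le_mul_of_nonneg_right
              (Real.exp_le_one_iff.2 (by linarith [hx.1, hy.1]))
              (Real.rpow_nonneg (abs_nonneg _) _)
        _ = |x - y| ^ (A - 1) := one_mul _
    rw [Real.norm_eq_abs, abs_of_nonneg (integral_nonneg (fun y => norm_nonneg _))]
    refine le_trans hmono ?_
    rw [← integral_of_le hT.le]
    exact fOU_inner_bound A hA hA1 T x hx

lemma fOU_swap (A : ℝ) (hA : 0 < A) (hA1 : A < 1) (T : ℝ) (hT : 0 < T) :
    (∫ x in (0:ℝ)..T, ∫ y in (0:ℝ)..x, fOU_f2 A (x, y))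
      = ∫ y in (0:ℝ)..T, ∫ x in y..T, fOU_f2 A (x, y) := by
  have hprod := fOU_prodInt A hA hA1 T hT
  have hswap := MeasureTheory.integral_integral_swap
    (μ := volume.restrict (Ioc (0:ℝ) T)) (ν := volume.restrict (Ioc (0:ℝ) T))
    (f := fun x y => fOU_F2 A (x, y)) (by exact hprod)
  calc (∫ x in (0:ℝ)..T, ∫ y in (0:ℝ)..x, fOU_f2 A (x, y))
      = ∫ x in Ioc (0:ℝ) T, ∫ y in Ioc (0:ℝ) T, fOU_F2 A (x, y) := by
        rw [integral_of_le hT.le]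
        apply setIntegral_congr_fun measurableSet_Ioc
        intro x hx
        show (∫ y in (0:ℝ)..x, fOU_f2 A (x, y)) = ∫ y in Ioc (0:ℝ) T, fOU_F2 A (x, y)
        rw [fOU_F2_slice A x, setIntegral_indicator measurableSet_Iic,
          Ioc_inter_Iic, min_eq_right hx.2, integral_of_le hx.1.le]
    _ = ∫ y in Ioc (0:ℝ) T, ∫ x in Ioc (0:ℝ) T, fOU_F2 A (x, y) := hswap
    _ = ∫ y in (0:ℝ)..T, ∫ x in y..T, fOU_f2 A (x, y) := by
        rw [integral_of_le hT.le]
        apply setIntegral_congr_fun measurableSet_Ioc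
        intro y hy
        show (∫ x in Ioc (0:ℝ) T, fOU_F2 A (x, y)) = ∫ x in y..T, fOU_f2 A (x, y)
        rw [fOU_F2_slice' A y, setIntegral_indicator measurableSet_Ici]
        have hset : Ioc (0:ℝ) T ∩ Ici y = Icc y T := by
          ext z
          simp only [mem_inter_iff, mem_Ioc, mem_Ici, mem_Icc]
          constructor
          · rintro ⟨⟨_, h2⟩, h3⟩; exact ⟨h3, h2⟩
          · rintro ⟨h1, h2⟩; exact ⟨⟨lt_of_lt_of_le hy.1 h1, h2⟩, h1⟩
        rw [hset, integral_Icc_eq_integral_Ioc, integral_of_le hy.2]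


lemma fOU_inner_sub (A x T : ℝ) :
    (∫ y in x..T, fOU_f2 A (x, y)) = Real.exp (-(2*x)) * fOU_G A (T - x) := by
  have h := integral_comp_add_right (a := 0) (b := T - x) (fun y => fOU_f2 A (x, y)) x
  simp only [zero_add, sub_add_cancel] at h
  rw [← h]
  have hfun : (fun u : ℝ => fOU_f2 A (x, u + x))
      = fun u : ℝ => Real.exp (-(2*x)) * (Real.exp (-u) * |u| ^ (A - 1)) := by
    funext u
    simp only [fOU_f2]
    rw [show x - (u + x) = -u by ring, abs_neg, show -(x + (u + x)) = -(2*x) + -u by ring,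
      Real.exp_add]
    ring
  rw [hfun, intervalIntegral.integral_const_mul]
  rfl

lemma fOU_inner_sub' (A y T : ℝ) :
    (∫ x in y..T, fOU_f2 A (x, y)) = Real.exp (-(2*y)) * fOU_G A (T - y) := by
  have h := integral_comp_add_right (a := 0) (b := T - y) (fun x => fOU_f2 A (x, y)) y
  simp only [zero_add, sub_add_cancel] at h
  rw [← h]
  have hfun : (fun u : ℝ => fOU_f2 A (u + y, y))
      = fun u : ℝ => Real.exp (-(2*y)) * (Real.exp (-u) * |u| ^ (A - 1)) := by
    funext u
    simp only [fOU_f2]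
    rw [show u + y - y = u by ring, show -(u + y + y) = -(2*y) + -u by ring, Real.exp_add]
    ring
  rw [hfun, intervalIntegral.integral_const_mul]
  rfl

lemma fOU_Jrepr (A : ℝ) (hA : 0 < A) (hA1 : A < 1) (T : ℝ) (hT : 0 < T) :
    (∫ x in (0:ℝ)..T, ∫ y in (0:ℝ)..T, Real.exp (-(x + y)) * |x - y| ^ (A - 1))
      = fOU_G A T - Real.exp (-(2*T)) * fOU_K A T := by
  have hr : (-1:ℝ) < A - 1 := by linarith
  have hsplit : EqOn (fun x => ∫ y in (0:ℝ)..T, Real.exp (-(x + y)) * |x - y| ^ (A - 1))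
      (fun x => (∫ y in (0:ℝ)..x, fOU_f2 A (x, y)) + ∫ y in x..T, fOU_f2 A (x, y))
      (uIcc 0 T) := by
    intro x _
    exact (integral_add_adjacent_intervals (slice_intervalIntegrable hr x 0 x)
      (slice_intervalIntegrable hr x x T)).symm
  rw [intervalIntegral.integral_congr hsplit]
  have hD2 : ∀ x, (∫ y in x..T, fOU_f2 A (x, y)) = Real.exp (-(2*x)) * fOU_G A (T - x) :=
    fun x => fOU_inner_sub A x T
  have hD2' : ∀ y, (∫ x in y..T, fOU_f2 A (x, y)) = Real.exp (-(2*y)) * fOU_G A (T - y) :=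
    fun y => fOU_inner_sub' A y T
  have hcontG : Continuous (fOU_G A) := fOU_G_cont A hA
  have hD2cont : Continuous (fun x : ℝ => Real.exp (-(2*x)) * fOU_G A (T - x)) :=
    ((Real.continuous_exp.comp (continuous_const.mul continuous_id).neg).mul
      (hcontG.comp (continuous_const.sub continuous_id)))
  have hD2II : IntervalIntegrable (fun x => ∫ y in x..T, fOU_f2 A (x, y)) volume 0 T := by
    rw [show (fun x => ∫ y in x..T, fOU_f2 A (x, y))
        = fun x => Real.exp (-(2*x)) * fOU_G A (T - x) from funext hD2]
    exact hD2cont.intervalIntegrable 0 T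
  have hD1II : IntervalIntegrable (fun x => ∫ y in (0:ℝ)..x, fOU_f2 A (x, y)) volume 0 T := by
    have h1 : Integrable (fun x => ∫ y in Ioc (0:ℝ) T, fOU_F2 A (x, y))
        (volume.restrict (Ioc 0 T)) := (fOU_prodInt A hA hA1 T hT).integral_prod_left
    rw [intervalIntegrable_iff_integrableOn_Ioc_of_le hT.le]
    refine h1.congr ?_
    filter_upwards [ae_restrict_mem measurableSet_Ioc] with x hx
    rw [fOU_F2_slice A x, setIntegral_indicator measurableSet_Iic, Ioc_inter_Iic,
      min_eq_right hx.2, integral_of_le hx.1.le]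
  rw [intervalIntegral.integral_add hD1II hD2II, fOU_swap A hA hA1 T hT]
  rw [intervalIntegral.integral_congr (g := fun y => Real.exp (-(2*y)) * fOU_G A (T - y))
      (fun y _ => hD2' y),
    intervalIntegral.integral_congr (g := fun x => Real.exp (-(2*x)) * fOU_G A (T - x))
      (fun x _ => hD2 x)]
  have hS : (∫ x in (0:ℝ)..T, Real.exp (-(2*x)) * fOU_G A (T - x))
      = Real.exp (-(2*T)) * ∫ x in (0:ℝ)..T, Real.exp (2*x) * fOU_G A x := by
    calc (∫ x in (0:ℝ)..T, Real.exp (-(2*x)) * fOU_G A (T - x))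
        = ∫ x in (0:ℝ)..T,
            (fun z => Real.exp (-(2*(T - z))) * fOU_G A z) (T - x) := by
          apply intervalIntegral.integral_congr
          intro x _
          simp only []
          rw [show T - (T - x) = x by ring]
      _ = ∫ x in T - T..T - 0, Real.exp (-(2*(T - x))) * fOU_G A x :=
          integral_comp_sub_left (fun z => Real.exp (-(2*(T - z))) * fOU_G A z) T
      _ = ∫ x in (0:ℝ)..T, Real.exp (-(2*(T - x))) * fOU_G A x := by norm_num
      _ = Real.exp (-(2*T)) * ∫ x in (0:ℝ)..T, Real.exp (2*x) * fOU_G A x := by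
          rw [show (fun x : ℝ => Real.exp (-(2*(T - x))) * fOU_G A x)
              = fun x : ℝ => Real.exp (-(2*T)) * (Real.exp (2*x) * fOU_G A x) from funext
              (fun x => by rw [show -(2*(T - x)) = -(2*T) + 2*x by ring, Real.exp_add]; ring),
            intervalIntegral.integral_const_mul]
  rw [hS, fOU_ftc A hA T hT]
  have hE : Real.exp (-(2*T)) * Real.exp (2*T) = 1 := by
    rw [← Real.exp_add]; ring_nf; exact Real.exp_zero
  linear_combination fOU_G A T * hE


lemma fOU_G_tendsto (A : ℝ) (hA : 0 < A) :
    Tendsto (fOU_G A) atTop (𝓝 (Real.Gamma A)) := by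
  have hI : IntegrableOn (fun u => Real.exp (-u) * |u| ^ (A - 1)) (Ioi 0) volume := by
    refine (Real.GammaIntegral_convergent hA).congr_fun ?_ measurableSet_Ioi
    intro u hu
    simp only []
    rw [abs_of_pos hu]
  have h := MeasureTheory.intervalIntegral_tendsto_integral_Ioi 0 hI tendsto_id
  have hval : (∫ u in Ioi (0:ℝ), Real.exp (-u) * |u| ^ (A - 1)) = Real.Gamma A := by
    rw [Real.Gamma_eq_integral hA]
    apply setIntegral_congr_fun measurableSet_Ioi
    intro u hu
    simp only []
    rw [abs_of_pos hu]
  rw [hval] at h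
  exact h

lemma fOU_expK_tendsto (A : ℝ) (hA : 0 < A) :
    Tendsto (fun T => Real.exp (-(2*T)) * fOU_K A T) atTop (𝓝 0) := by
  have hr : (-1:ℝ) < A - 1 := by linarith
  apply squeeze_zero' (g := fun T => T ^ A * Real.exp (-1 * T) / A)
  · filter_upwards [eventually_ge_atTop (0:ℝ)] with T hT
    have hK0 : 0 ≤ fOU_K A T := by
      apply intervalIntegral.integral_nonneg hT
      intro u hu
      exact mul_nonneg (Real.exp_pos _).le (Real.rpow_nonneg (abs_nonneg _) _)
    exact mul_nonneg (Real.exp_pos _).le hK0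
  · filter_upwards [eventually_ge_atTop (0:ℝ)] with T hT
    have hK : fOU_K A T ≤ Real.exp T * (T ^ A / A) := by
      have h1 : fOU_K A T ≤ ∫ u in (0:ℝ)..T, Real.exp T * |u| ^ (A - 1) := by
        apply intervalIntegral.integral_mono_on hT (fOU_K_int A hA 0 T)
          ((absRpow_intervalIntegrable hr 0 T).const_mul _)
        intro u hu
        exact mul_le_mul_of_nonneg_right (Real.exp_le_exp.2 hu.2)
          (Real.rpow_nonneg (abs_nonneg _) _)
      rwa [intervalIntegral.integral_const_mul, absRpow_integral A hA T hT] at h1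
    have he : Real.exp (-(2*T)) * Real.exp T = Real.exp (-1 * T) := by
      rw [← Real.exp_add]; ring_nf
    calc Real.exp (-(2*T)) * fOU_K A T
        ≤ Real.exp (-(2*T)) * (Real.exp T * (T ^ A / A)) :=
          mul_le_mul_of_nonneg_left hK (Real.exp_pos _).le
      _ = T ^ A * Real.exp (-1 * T) / A := by
          rw [← mul_assoc, he]; ring
  · have := (tendsto_rpow_mul_exp_neg_mul_atTop_nhds_zero A 1 one_pos).div_const A
    rwa [zero_div] at this

lemma fOU_sub_helper (g : ℝ → ℝ) (t μ : ℝ) (hμ : 0 < μ) :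
    (∫ s in (0:ℝ)..t, g s) = μ⁻¹ * ∫ y in (0:ℝ)..(μ*t), g (t - y/μ) := by
  have h1 : (∫ s in (0:ℝ)..t, g (t - s)) = ∫ s in (0:ℝ)..t, g s := by
    have h := integral_comp_sub_left (a := 0) (b := t) g t
    simpa using h -- keep
  have h3 : (fun x : ℝ => (fun y : ℝ => g (t - y/μ)) (x * μ)) = fun x : ℝ => g (t - x) := by
    funext x
    simp only []
    rw [mul_div_cancel_right₀ x hμ.ne']
  have h2 := integral_comp_mul_right (a := 0) (b := t) (fun y : ℝ => g (t - y/μ)) hμ.ne'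
  rw [h3] at h2
  rw [← h1, h2]
  simp only [zero_mul, smul_eq_mul]
  rw [mul_comm t μ]

lemma fOU_stepA (H t : ℝ) (hH1 : 1 / 2 < H) (hH2 : H < 1) (ht : 0 < t) (μ : ℝ) (hμ : 0 < μ) :
    μ ^ (2 * H) * Real.exp (-2 * μ * t) *
        (∫ s₁ in (0 : ℝ)..t, ∫ s₂ in (0 : ℝ)..t,
          Real.exp (μ * (s₁ + s₂)) * |s₁ - s₂| ^ (2 * H - 2))
      = ∫ x in (0:ℝ)..(μ*t), ∫ y in (0:ℝ)..(μ*t),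
          Real.exp (-(x + y)) * |x - y| ^ (2 * H - 2) := by
  set r : ℝ := 2 * H - 2 with hrdef
  have hin : ∀ s₁ : ℝ, (∫ s₂ in (0:ℝ)..t, Real.exp (μ * (s₁ + s₂)) * |s₁ - s₂| ^ r)
      = μ⁻¹ * ∫ y in (0:ℝ)..(μ*t),
          Real.exp (μ * (s₁ + (t - y/μ))) * |s₁ - (t - y/μ)| ^ r :=
    fun s₁ => fOU_sub_helper (fun s => Real.exp (μ * (s₁ + s)) * |s₁ - s| ^ r) t μ hμ
  have houter : (∫ s₁ in (0:ℝ)..t, ∫ s₂ in (0:ℝ)..t,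
        Real.exp (μ * (s₁ + s₂)) * |s₁ - s₂| ^ r)
      = μ⁻¹ * (μ⁻¹ * ∫ x in (0:ℝ)..(μ*t), ∫ y in (0:ℝ)..(μ*t),
          Real.exp (μ * ((t - x/μ) + (t - y/μ))) * |(t - x/μ) - (t - y/μ)| ^ r) := by
    have hcongr : (fun s₁ => ∫ s₂ in (0:ℝ)..t, Real.exp (μ * (s₁ + s₂)) * |s₁ - s₂| ^ r)
        = fun s₁ => μ⁻¹ * ∫ y in (0:ℝ)..(μ*t),
            Real.exp (μ * (s₁ + (t - y/μ))) * |s₁ - (t - y/μ)| ^ r := funext hin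
    rw [hcongr, intervalIntegral.integral_const_mul]
    congr 1
    exact fOU_sub_helper (fun s₁ => ∫ y in (0:ℝ)..(μ*t),
      Real.exp (μ * (s₁ + (t - y/μ))) * |s₁ - (t - y/μ)| ^ r) t μ hμ
  have hintegrand : ∀ x y : ℝ,
      Real.exp (μ * ((t - x/μ) + (t - y/μ))) * |(t - x/μ) - (t - y/μ)| ^ r
        = (Real.exp (2*μ*t) * (μ ^ r)⁻¹) * (Real.exp (-(x + y)) * |x - y| ^ r) := by
    intro x y
    have e1 : μ * ((t - x/μ) + (t - y/μ)) = 2*μ*t + -(x + y) := by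
      field_simp
      ring
    have e2 : (t - x/μ) - (t - y/μ) = (y - x)/μ := by ring
    rw [e1, Real.exp_add, e2, abs_div, abs_of_pos hμ,
      Real.div_rpow (abs_nonneg _) hμ.le, abs_sub_comm]
    rw [div_eq_mul_inv]
    ring
  have hJ : (∫ x in (0:ℝ)..(μ*t), ∫ y in (0:ℝ)..(μ*t),
        Real.exp (μ * ((t - x/μ) + (t - y/μ))) * |(t - x/μ) - (t - y/μ)| ^ r)
      = (Real.exp (2*μ*t) * (μ ^ r)⁻¹) * ∫ x in (0:ℝ)..(μ*t), ∫ y in (0:ℝ)..(μ*t),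
          Real.exp (-(x + y)) * |x - y| ^ r := by
    rw [show (fun x => ∫ y in (0:ℝ)..(μ*t),
        Real.exp (μ * ((t - x/μ) + (t - y/μ))) * |(t - x/μ) - (t - y/μ)| ^ r)
        = fun x => (Real.exp (2*μ*t) * (μ ^ r)⁻¹) * ∫ y in (0:ℝ)..(μ*t),
            Real.exp (-(x + y)) * |x - y| ^ r from funext (fun x => by
          rw [show (fun y => Real.exp (μ * ((t - x/μ) + (t - y/μ)))
              * |(t - x/μ) - (t - y/μ)| ^ r)
              = fun y => (Real.exp (2*μ*t) * (μ ^ r)⁻¹) *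
                (Real.exp (-(x + y)) * |x - y| ^ r) from funext (fun y => hintegrand x y),
            intervalIntegral.integral_const_mul]),
      intervalIntegral.integral_const_mul]
  rw [houter, hJ]
  have hexp : Real.exp (-2*μ*t) * Real.exp (2*μ*t) = 1 := by
    rw [← Real.exp_add]; ring_nf; exact Real.exp_zero
  have hpow : μ ^ (2*H) * (μ⁻¹ * μ⁻¹ * (μ ^ r)⁻¹) = 1 := by
    rw [← Real.rpow_neg_one μ, ← Real.rpow_neg hμ.le, ← Real.rpow_add hμ,
      ← Real.rpow_add hμ, ← Real.rpow_add hμ]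
    rw [show 2*H + (-1 + -1 + -r) = 0 by rw [hrdef]; ring, Real.rpow_zero]
  calc μ ^ (2 * H) * Real.exp (-2 * μ * t) *
        (μ⁻¹ * (μ⁻¹ * ((Real.exp (2*μ*t) * (μ ^ r)⁻¹) * ∫ x in (0:ℝ)..(μ*t),
          ∫ y in (0:ℝ)..(μ*t), Real.exp (-(x + y)) * |x - y| ^ r)))
      = (μ ^ (2*H) * (μ⁻¹ * μ⁻¹ * (μ ^ r)⁻¹)) * (Real.exp (-2*μ*t) * Real.exp (2*μ*t)) *
          (∫ x in (0:ℝ)..(μ*t), ∫ y in (0:ℝ)..(μ*t),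
            Real.exp (-(x + y)) * |x - y| ^ r) := by ring
    _ = _ := by rw [hexp, hpow]; ring

/-- For `H ∈ (1/2,1)` and `t > 0`,
`μ^{2H} e^{-2μt} ∫_0^t ∫_0^t e^{μ(s₁+s₂)} |s₁-s₂|^{2H-2} ds₁ ds₂ → Γ(2H-1)` as `μ → +∞`. -/
theorem fOU_variance_asymptotics (H t : ℝ) (hH1 : 1 / 2 < H) (hH2 : H < 1) (ht : 0 < t) :
    Tendsto
      (fun μ : ℝ => μ ^ (2 * H) * Real.exp (-2 * μ * t) *
        ∫ s₁ in (0 : ℝ)..t, ∫ s₂ in (0 : ℝ)..t,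
          Real.exp (μ * (s₁ + s₂)) * |s₁ - s₂| ^ (2 * H - 2))
      atTop (nhds (Real.Gamma (2 * H - 1))) := by
  have hA : (0:ℝ) < 2 * H - 1 := by linarith
  have hA1 : 2 * H - 1 < 1 := by linarith
  have hmul : Tendsto (fun μ : ℝ => μ * t) atTop atTop :=
    Tendsto.atTop_mul_const ht tendsto_id
  have h1 : Tendsto (fun μ : ℝ => fOU_G (2 * H - 1) (μ * t)) atTop
      (nhds (Real.Gamma (2 * H - 1))) := (fOU_G_tendsto _ hA).comp hmul
  have h2 : Tendsto (fun μ : ℝ => Real.exp (-(2 * (μ * t))) * fOU_K (2 * H - 1) (μ * t))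
      atTop (nhds 0) := (fOU_expK_tendsto _ hA).comp hmul
  have h := h1.sub h2
  rw [sub_zero] at h
  apply Tendsto.congr' ?_ h
  filter_upwards [eventually_gt_atTop (0:ℝ)] with μ hμ
  have hJ := fOU_Jrepr (2 * H - 1) hA hA1 (μ * t) (by positivity)
  rw [show (2 * H - 1 - 1 : ℝ) = 2 * H - 2 by ring] at hJ
  rw [← hJ]
  exact (fOU_stepA H t hH1 hH2 ht μ hμ).symm
end

section
/- Fix H \in (1/2,1) and a > 0. Then \lim_{t \to +\infty} e^{-2at} \int_0^t\int_0^t e^{a(s_1+s_2)}\,|s_1-s_2|^{2H-2}\,ds_1\,ds_2 = \Gamma(2H-1)\, a^{-2H}, where \Gamma is the Gamma function. -/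
open Filter intervalIntegral

section fOUAux

open MeasureTheory Set

/-- Auxiliary primitive `K t = ∫_0^t e^{-au} u^r du`. -/
noncomputable def fOUKf (a r : ℝ) : ℝ → ℝ := fun t => ∫ u in (0:ℝ)..t, Real.exp (-a*u) * u ^ r

/-- Auxiliary primitive `J t = ∫_0^t e^{au} u^r du`. -/
noncomputable def fOUJf (a r : ℝ) : ℝ → ℝ := fun t => ∫ u in (0:ℝ)..t, Real.exp (a*u) * u ^ r

lemma fOU_abs_intervalIntegrable {r : ℝ} (hr : -1 < r) (c d : ℝ) :
    IntervalIntegrable (fun u => |u| ^ r) volume c d := by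
  suffices h0 : ∀ c : ℝ, IntervalIntegrable (fun u => |u| ^ r) volume 0 c from
    (h0 c).symm.trans (h0 d)
  have hpos : ∀ c : ℝ, 0 ≤ c → IntervalIntegrable (fun u => |u| ^ r) volume 0 c := by
    intro c hc
    have h := intervalIntegrable_rpow' (a := 0) (b := c) hr
    rw [intervalIntegrable_iff, uIoc_of_le hc] at h ⊢
    exact h.congr_fun (fun x hx => by rw [abs_of_pos hx.1]) measurableSet_Ioc
  intro c
  rcases le_or_gt 0 c with hc | hc
  · exact hpos c hc
  · have h1 : IntervalIntegrable (fun u => |u| ^ r) volume 0 (-c) := hpos _ (by linarith)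
    have h2 := (IntervalIntegrable.iff_comp_neg (by simp)).mp h1
    simpa using h2

lemma fOU_exp_rpow_intervalIntegrable {r : ℝ} (hr : -1 < r) (a c d : ℝ) :
    IntervalIntegrable (fun u => Real.exp (a*u) * u ^ r) volume c d :=
  (intervalIntegrable_rpow' hr).continuousOn_mul
    ((Real.continuous_exp.comp (continuous_const.mul continuous_id)).continuousOn)

lemma fOUKf_continuous {r : ℝ} (hr : -1 < r) (a : ℝ) : Continuous (fOUKf a r) :=
  intervalIntegral.continuous_primitive
    (fun c d => fOU_exp_rpow_intervalIntegrable hr (-a) c d) 0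

lemma fOUJf_continuous {r : ℝ} (hr : -1 < r) (a : ℝ) : Continuous (fOUJf a r) :=
  intervalIntegral.continuous_primitive
    (fun c d => fOU_exp_rpow_intervalIntegrable hr a c d) 0

lemma fOUKf_hasDerivAt {r : ℝ} (hr : -1 < r) (a : ℝ) {x : ℝ} (hx : 0 < x) :
    HasDerivAt (fOUKf a r) (Real.exp (-a*x) * x ^ r) x := by
  refine intervalIntegral.integral_hasDerivAt_right (fOU_exp_rpow_intervalIntegrable hr (-a) 0 x)
    ⟨Set.univ, Filter.univ_mem, ?_⟩ ?_
  · exact ((by fun_prop : Measurable fun u : ℝ => Real.exp (-a*u) * u ^ r)).aestronglyMeasurable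
  · exact ((Real.continuous_exp.comp (continuous_const.mul continuous_id)).continuousAt).mul
      (Real.continuousAt_rpow_const x r (Or.inl hx.ne'))

lemma fOUJf_hasDerivAt {r : ℝ} (hr : -1 < r) (a : ℝ) {x : ℝ} (hx : 0 < x) :
    HasDerivAt (fOUJf a r) (Real.exp (a*x) * x ^ r) x := by
  refine intervalIntegral.integral_hasDerivAt_right (fOU_exp_rpow_intervalIntegrable hr a 0 x)
    ⟨Set.univ, Filter.univ_mem, ?_⟩ ?_
  · exact ((by fun_prop : Measurable fun u : ℝ => Real.exp (a*u) * u ^ r)).aestronglyMeasurable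
  · exact ((Real.continuous_exp.comp (continuous_const.mul continuous_id)).continuousAt).mul
      (Real.continuousAt_rpow_const x r (Or.inl hx.ne'))

lemma fOU_ibpA {r a : ℝ} (hr : -1 < r) (ha : 0 < a) {t : ℝ} (ht : 0 ≤ t) :
    ∫ s in (0:ℝ)..t, Real.exp (2*a*s) * fOUKf a r s
      = (Real.exp (2*a*t) * fOUKf a r t - fOUJf a r t) / (2*a) := by
  have cexp : Continuous fun s : ℝ => Real.exp (2*a*s) :=
    Real.continuous_exp.comp (continuous_const.mul continuous_id)
  have h2a : (2*a) ≠ 0 := by positivity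
  have key := intervalIntegral.integral_eq_sub_of_hasDeriv_right_of_le (a := 0) (b := t)
    (f := fun x => (Real.exp (2*a*x) * fOUKf a r x - fOUJf a r x) / (2*a))
    (f' := fun s => Real.exp (2*a*s) * fOUKf a r s) ht
    (((cexp.mul (fOUKf_continuous hr a)).sub (fOUJf_continuous hr a)).div_const (2*a)).continuousOn
    (fun x hx => by
      have h1 : HasDerivAt (fun x : ℝ => Real.exp (2*a*x)) (Real.exp (2*a*x) * (2*a)) x := by
        simpa [Function.comp_def] using
          (Real.hasDerivAt_exp (2*a*x)).comp x ((hasDerivAt_id x).const_mul (2*a))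
      have h4 := ((h1.mul (fOUKf_hasDerivAt hr a hx.1)).sub (fOUJf_hasDerivAt hr a hx.1)).div_const (2*a)
      refine (HasDerivAt.hasDerivWithinAt ?_)
      refine h4.congr_deriv (Eq.symm ?_)
      rw [eq_div_iff h2a, show Real.exp (2*a*x) * (Real.exp (-a*x) * x ^ r)
          = (Real.exp (2*a*x) * Real.exp (-a*x)) * x ^ r from by ring,
        ← Real.exp_add, show (2*a*x) + (-a*x) = a*x from by ring]
      ring)
    ((cexp.mul (fOUKf_continuous hr a)).intervalIntegrable 0 t)
  rw [key]
  simp [fOUKf, fOUJf, intervalIntegral.integral_same]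

lemma fOU_ibpB {r a : ℝ} (hr : -1 < r) (ha : 0 < a) {t : ℝ} (ht : 0 ≤ t) :
    ∫ u in (0:ℝ)..t, Real.exp (-(2*a*u)) * fOUJf a r u
      = (fOUKf a r t - Real.exp (-(2*a*t)) * fOUJf a r t) / (2*a) := by
  have cexp : Continuous fun s : ℝ => Real.exp (-(2*a*s)) :=
    Real.continuous_exp.comp (continuous_const.mul continuous_id).neg
  have h2a : (2*a) ≠ 0 := by positivity
  have key := intervalIntegral.integral_eq_sub_of_hasDeriv_right_of_le (a := 0) (b := t)
    (f := fun x => (fOUKf a r x - Real.exp (-(2*a*x)) * fOUJf a r x) / (2*a))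
    (f' := fun u => Real.exp (-(2*a*u)) * fOUJf a r u) ht
    (((fOUKf_continuous hr a).sub (cexp.mul (fOUJf_continuous hr a))).div_const (2*a)).continuousOn
    (fun x hx => by
      have h1 : HasDerivAt (fun x : ℝ => Real.exp (-(2*a*x))) (Real.exp (-(2*a*x)) * (-(2*a))) x := by
        simpa [Function.comp_def] using
          (Real.hasDerivAt_exp (-(2*a*x))).comp x (((hasDerivAt_id x).const_mul (2*a)).neg)
      have h4 := ((fOUKf_hasDerivAt hr a hx.1).sub (h1.mul (fOUJf_hasDerivAt hr a hx.1))).div_const (2*a)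
      refine (HasDerivAt.hasDerivWithinAt ?_)
      refine h4.congr_deriv (Eq.symm ?_)
      rw [eq_div_iff h2a, show Real.exp (-(2*a*x)) * (Real.exp (a*x) * x ^ r)
          = (Real.exp (-(2*a*x)) * Real.exp (a*x)) * x ^ r from by ring,
        ← Real.exp_add, show (-(2*a*x)) + (a*x) = -a*x from by ring]
      ring)
    ((cexp.mul (fOUJf_continuous hr a)).intervalIntegrable 0 t)
  rw [key]
  simp [fOUKf, fOUJf, intervalIntegral.integral_same]

lemma fOU_inner {r a : ℝ} (hr : -1 < r) {t : ℝ} (_ht : 0 ≤ t) {s₁ : ℝ}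
    (hs₁ : s₁ ∈ Set.Icc 0 t) :
    (∫ s₂ in (0:ℝ)..t, Real.exp (a*(s₁+s₂)) * |s₁-s₂| ^ r)
      = Real.exp (2*a*s₁) * (fOUKf a r s₁ + fOUJf a r (t - s₁)) := by
  obtain ⟨h0s, hst⟩ := hs₁
  have hintgen : ∀ c d : ℝ,
      IntervalIntegrable (fun s₂ => Real.exp (a*(s₁+s₂)) * |s₁-s₂| ^ r) volume c d := by
    intro c d
    have h := (fOU_abs_intervalIntegrable hr (s₁ - c) (s₁ - d)).comp_sub_left s₁
    simp only [sub_sub_cancel] at h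
    exact h.continuousOn_mul
      ((Real.continuous_exp.comp (continuous_const.mul (continuous_const.add continuous_id))).continuousOn)
  rw [← intervalIntegral.integral_add_adjacent_intervals (hintgen 0 s₁) (hintgen s₁ t)]
  have p1 : (∫ s₂ in (0:ℝ)..s₁, Real.exp (a*(s₁+s₂)) * |s₁-s₂| ^ r)
      = Real.exp (2*a*s₁) * fOUKf a r s₁ := by
    calc (∫ s₂ in (0:ℝ)..s₁, Real.exp (a*(s₁+s₂)) * |s₁-s₂| ^ r)
        = ∫ s₂ in (0:ℝ)..s₁, (fun u => Real.exp (a*(2*s₁-u)) * |u| ^ r) (s₁ - s₂) := by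
          apply intervalIntegral.integral_congr
          intro x _
          simp only
          rw [show a*(2*s₁-(s₁-x)) = a*(s₁+x) from by ring]
      _ = ∫ u in (s₁ - s₁)..(s₁ - 0), Real.exp (a*(2*s₁-u)) * |u| ^ r :=
          intervalIntegral.integral_comp_sub_left (fun u => Real.exp (a*(2*s₁-u)) * |u| ^ r) s₁
      _ = ∫ u in (0:ℝ)..s₁, Real.exp (2*a*s₁) * (Real.exp (-a*u) * u ^ r) := by
          rw [sub_self, sub_zero]
          apply intervalIntegral.integral_congr
          intro u hu
          rw [Set.uIcc_of_le h0s] at hu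
          show Real.exp (a*(2*s₁-u)) * |u| ^ r = Real.exp (2*a*s₁) * (Real.exp (-a*u) * u ^ r)
          rw [abs_of_nonneg hu.1, show a*(2*s₁-u) = 2*a*s₁ + (-a*u) from by ring,
            Real.exp_add]
          ring
      _ = Real.exp (2*a*s₁) * fOUKf a r s₁ := intervalIntegral.integral_const_mul _ _
  have p2 : (∫ s₂ in s₁..t, Real.exp (a*(s₁+s₂)) * |s₁-s₂| ^ r)
      = Real.exp (2*a*s₁) * fOUJf a r (t - s₁) := by
    calc (∫ s₂ in s₁..t, Real.exp (a*(s₁+s₂)) * |s₁-s₂| ^ r)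
        = ∫ s₂ in s₁..t, (fun u => Real.exp (a*(2*s₁+u)) * |u| ^ r) (s₂ - s₁) := by
          apply intervalIntegral.integral_congr
          intro x _
          simp only
          rw [show a*(2*s₁+(x-s₁)) = a*(s₁+x) from by ring, abs_sub_comm]
      _ = ∫ u in (s₁ - s₁)..(t - s₁), Real.exp (a*(2*s₁+u)) * |u| ^ r :=
          intervalIntegral.integral_comp_sub_right (fun u => Real.exp (a*(2*s₁+u)) * |u| ^ r) s₁
      _ = ∫ u in (0:ℝ)..(t - s₁), Real.exp (2*a*s₁) * (Real.exp (a*u) * u ^ r) := by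
          rw [sub_self]
          apply intervalIntegral.integral_congr
          intro u hu
          rw [Set.uIcc_of_le (by linarith : (0:ℝ) ≤ t - s₁)] at hu
          show Real.exp (a*(2*s₁+u)) * |u| ^ r = Real.exp (2*a*s₁) * (Real.exp (a*u) * u ^ r)
          rw [abs_of_nonneg hu.1, show a*(2*s₁+u) = 2*a*s₁ + a*u from by ring, Real.exp_add]
          ring
      _ = Real.exp (2*a*s₁) * fOUJf a r (t - s₁) := intervalIntegral.integral_const_mul _ _
  rw [p1, p2]; ring

lemma fOU_main_identity {r a : ℝ} (hr : -1 < r) (ha : 0 < a) {t : ℝ} (ht : 0 ≤ t) :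
    Real.exp (-2*a*t) * ∫ s₁ in (0:ℝ)..t, ∫ s₂ in (0:ℝ)..t,
        Real.exp (a*(s₁+s₂)) * |s₁-s₂| ^ r
      = (fOUKf a r t - Real.exp (-(2*a*t)) * fOUJf a r t) / a := by
  have cexp : Continuous fun s : ℝ => Real.exp (2*a*s) :=
    Real.continuous_exp.comp (continuous_const.mul continuous_id)
  have e1 : (∫ s₁ in (0:ℝ)..t, ∫ s₂ in (0:ℝ)..t, Real.exp (a*(s₁+s₂)) * |s₁-s₂| ^ r)
      = ∫ s₁ in (0:ℝ)..t, Real.exp (2*a*s₁) * (fOUKf a r s₁ + fOUJf a r (t - s₁)) := by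
    apply intervalIntegral.integral_congr
    intro s₁ hs₁
    rw [Set.uIcc_of_le ht] at hs₁
    exact fOU_inner hr ht hs₁
  have e2 : (∫ s₁ in (0:ℝ)..t, Real.exp (2*a*s₁) * (fOUKf a r s₁ + fOUJf a r (t - s₁)))
      = (∫ s₁ in (0:ℝ)..t, Real.exp (2*a*s₁) * fOUKf a r s₁)
        + ∫ s₁ in (0:ℝ)..t, Real.exp (2*a*s₁) * fOUJf a r (t - s₁) := by
    simp_rw [mul_add]
    exact intervalIntegral.integral_add
      ((cexp.mul (fOUKf_continuous hr a)).intervalIntegrable 0 t)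
      ((cexp.mul ((fOUJf_continuous hr a).comp
        (continuous_const.sub continuous_id))).intervalIntegrable 0 t)
  have e3 : (∫ s₁ in (0:ℝ)..t, Real.exp (2*a*s₁) * fOUJf a r (t - s₁))
      = ∫ u in (0:ℝ)..t, Real.exp (2*a*(t-u)) * fOUJf a r u := by
    have h := intervalIntegral.integral_comp_sub_left (a := 0) (b := t)
      (fun u => Real.exp (2*a*(t-u)) * fOUJf a r u) t
    simp only [sub_sub_cancel, sub_self, sub_zero] at h
    rw [← h]
  have e4 : (∫ u in (0:ℝ)..t, Real.exp (2*a*(t-u)) * fOUJf a r u)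
      = Real.exp (2*a*t) * ∫ u in (0:ℝ)..t, Real.exp (-(2*a*u)) * fOUJf a r u := by
    rw [← intervalIntegral.integral_const_mul]
    apply intervalIntegral.integral_congr
    intro u _
    show Real.exp (2*a*(t-u)) * fOUJf a r u
      = Real.exp (2*a*t) * (Real.exp (-(2*a*u)) * fOUJf a r u)
    rw [← mul_assoc, ← Real.exp_add, show (2*a*t) + (-(2*a*u)) = 2*a*(t-u) from by ring]
  rw [e1, e2, e3, e4, fOU_ibpA hr ha ht, fOU_ibpB hr ha ht]
  rw [show (-2)*a*t = -(2*a*t) from by ring, Real.exp_neg]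
  have hE : Real.exp (2*a*t) ≠ 0 := Real.exp_ne_zero _
  field_simp
  ring

lemma fOUKf_tendsto {r a : ℝ} (hr : -1 < r) (ha : 0 < a) :
    Tendsto (fOUKf a r) atTop (nhds (Real.Gamma (r+1) * a ^ (-(r+1)))) := by
  have hIoi : IntegrableOn (fun u => Real.exp (-a*u) * u ^ r) (Set.Ioi (0:ℝ)) := by
    have h := integrableOn_rpow_mul_exp_neg_mul_rpow (p := 1) hr one_pos ha
    simp only [Real.rpow_one] at h
    exact h.congr_fun (fun x _ => by beta_reduce; rw [mul_comm, neg_mul]) measurableSet_Ioi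
  have h1 := MeasureTheory.intervalIntegral_tendsto_integral_Ioi 0 hIoi tendsto_id
  have h2 : (∫ u in Set.Ioi (0:ℝ), Real.exp (-a*u) * u ^ r)
      = Real.Gamma (r+1) * a ^ (-(r+1)) := by
    calc (∫ u in Set.Ioi (0:ℝ), Real.exp (-a*u) * u ^ r)
        = ∫ x in Set.Ioi (0:ℝ), x ^ r * Real.exp (-a * x ^ (1:ℝ)) := by
          apply setIntegral_congr_fun measurableSet_Ioi
          intro x _
          show Real.exp (-a*x) * x ^ r = x ^ r * Real.exp (-a * x ^ (1:ℝ))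
          rw [Real.rpow_one, mul_comm, neg_mul]
      _ = a ^ (-(r+1)/1) * (1/1) * Real.Gamma ((r+1)/1) :=
          integral_rpow_mul_exp_neg_mul_rpow one_pos hr ha
      _ = Real.Gamma (r+1) * a ^ (-(r+1)) := by rw [div_one, div_one]; ring_nf
  rw [← h2]
  exact h1

lemma fOUJf_exp_tendsto {r a : ℝ} (hr : -1 < r) (ha : 0 < a) :
    Tendsto (fun t => Real.exp (-(2*a*t)) * fOUJf a r t) atTop (nhds 0) := by
  have hr1 : (0:ℝ) < r + 1 := by linarith
  have hg : Tendsto (fun t : ℝ => (1/(r+1)) * (t ^ (r+1) * Real.exp (-a*t))) atTop (nhds 0) := by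
    have h := tendsto_rpow_mul_exp_neg_mul_atTop_nhds_zero (r+1) a ha
    simpa using h.const_mul (1/(r+1))
  refine tendsto_of_tendsto_of_tendsto_of_le_of_le' tendsto_const_nhds hg ?_ ?_
  · filter_upwards [eventually_ge_atTop (0:ℝ)] with t ht
    have hJpos : 0 ≤ fOUJf a r t := by
      apply intervalIntegral.integral_nonneg ht
      intro u hu
      exact mul_nonneg (Real.exp_pos _).le (Real.rpow_nonneg hu.1 r)
    positivity
  · filter_upwards [eventually_ge_atTop (0:ℝ)] with t ht
    have m1 : fOUJf a r t ≤ ∫ u in (0:ℝ)..t, Real.exp (a*t) * u ^ r := by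
      apply intervalIntegral.integral_mono_on ht (fOU_exp_rpow_intervalIntegrable hr a 0 t)
        ((intervalIntegrable_rpow' hr).continuousOn_mul continuousOn_const)
      intro u hu
      exact mul_le_mul_of_nonneg_right
        (Real.exp_le_exp.mpr (mul_le_mul_of_nonneg_left hu.2 ha.le))
        (Real.rpow_nonneg hu.1 r)
    have m2 : (∫ u in (0:ℝ)..t, Real.exp (a*t) * u ^ r)
        = Real.exp (a*t) * (t ^ (r+1) / (r+1)) := by
      rw [intervalIntegral.integral_const_mul, integral_rpow (Or.inl hr),
        Real.zero_rpow (by positivity : r + 1 ≠ 0), sub_zero]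
    have m3 : Real.exp (-(2*a*t)) * fOUJf a r t
        ≤ Real.exp (-(2*a*t)) * (Real.exp (a*t) * (t ^ (r+1) / (r+1))) := by
      apply mul_le_mul_of_nonneg_left _ (Real.exp_pos _).le
      rw [← m2]; exact m1
    calc Real.exp (-(2*a*t)) * fOUJf a r t
        ≤ Real.exp (-(2*a*t)) * (Real.exp (a*t) * (t ^ (r+1) / (r+1))) := m3
      _ = (1/(r+1)) * (t ^ (r+1) * (Real.exp (-(2*a*t)) * Real.exp (a*t))) := by ring
      _ = (1/(r+1)) * (t ^ (r+1) * Real.exp (-a*t)) := by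
          rw [← Real.exp_add, show -(2*a*t) + a*t = -a*t from by ring]

lemma fOU_aux (r a : ℝ) (hr : -1 < r) (ha : 0 < a) :
    Tendsto
      (fun t : ℝ => Real.exp (-2 * a * t) *
        ∫ s₁ in (0 : ℝ)..t, ∫ s₂ in (0 : ℝ)..t,
          Real.exp (a * (s₁ + s₂)) * |s₁ - s₂| ^ r)
      atTop (nhds (Real.Gamma (r+1) * a ^ (-(r+1)) / a)) := by
  have hlim : Tendsto (fun t => (fOUKf a r t - Real.exp (-(2*a*t)) * fOUJf a r t) / a)
      atTop (nhds ((Real.Gamma (r+1) * a ^ (-(r+1)) - 0) / a)) :=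
    ((fOUKf_tendsto hr ha).sub (fOUJf_exp_tendsto hr ha)).div_const a
  rw [sub_zero] at hlim
  refine Tendsto.congr' ?_ hlim
  filter_upwards [eventually_ge_atTop (0:ℝ)] with t ht
  exact (fOU_main_identity hr ha ht).symm

end fOUAux

/-- For `H ∈ (1/2,1)` and `a > 0`,
`e^{-2at} ∫_0^t ∫_0^t e^{a(s₁+s₂)} |s₁-s₂|^{2H-2} ds₁ ds₂ → Γ(2H-1) a^{-2H}` as `t → +∞`. -/
theorem fOU_invariant_variance (H a : ℝ) (hH1 : 1 / 2 < H) (hH2 : H < 1) (ha : 0 < a) :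
    Tendsto
      (fun t : ℝ => Real.exp (-2 * a * t) *
        ∫ s₁ in (0 : ℝ)..t, ∫ s₂ in (0 : ℝ)..t,
          Real.exp (a * (s₁ + s₂)) * |s₁ - s₂| ^ (2 * H - 2))
      atTop (nhds (Real.Gamma (2 * H - 1) * a ^ (-(2 * H)))) := by
  have h := fOU_aux (2*H - 2) a (by linarith) ha
  have e : Real.Gamma (2*H - 2 + 1) * a ^ (-(2*H - 2 + 1)) / a
      = Real.Gamma (2 * H - 1) * a ^ (-(2 * H)) := by
    rw [show 2*H - 2 + 1 = 2*H - 1 from by ring]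
    rw [div_eq_mul_inv, mul_assoc, ← Real.rpow_neg_one a, ← Real.rpow_add ha,
      show -(2*H - 1) + (-1) = -(2*H) from by ring]
  rw [e] at h
  exact h
end

section
/- Fix H \in [1/2, 1) and T > 0. For p > -1 and x > 0 let I_p(x) = \sum_{k=0}^{\infty} (x/2)^{2k+p} / (k!\,\Gamma(k+p+1)). Then \lim_{\mu \to +\infty} \mu \cdot \dfrac{2 + 2e^{\mu T}(1-\mu T) - \dfrac{\pi \mu T}{\sin(\pi H)}\, I_{H-1}\!\left(\tfrac{\mu T}{2}\right) I_{-H}\!\left(\tfrac{\mu T}{2}\right)}{4\,\mu^{2}\, e^{\mu T}} = -\dfrac{T}{2}. -/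
open Filter

/-- The modified Bessel function of the first kind of order `p`, defined by its
convergent power series (for `x > 0`, `p > -1`). -/
noncomputable def besselI (p x : ℝ) : ℝ :=
  ∑' k : ℕ, (x / 2) ^ (2 * (k : ℝ) + p) / ((k.factorial : ℝ) * Real.Gamma ((k : ℝ) + p + 1))


section Helpers
open Real

private lemma fact_le_gamma (a : ℝ) (ha : 1 ≤ a) : ∀ k : ℕ, Gamma a * k.factorial ≤ Gamma (k + a) := by
  intro k
  induction k with
  | zero => simp
  | succ n ih =>
    have h1 : (0:ℝ) < (n:ℝ) + a := by positivity
    have h2 : Gamma (((n:ℕ)+1 : ℕ) + a) = ((n:ℝ)+a) * Gamma ((n:ℝ)+a) := by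
      push_cast
      rw [show (n:ℝ) + 1 + a = ((n:ℝ)+a) + 1 by ring, Real.Gamma_add_one h1.ne']
    rw [h2]
    have h3 : (Gamma a * ((n+1).factorial : ℝ)) = ((n:ℝ)+1) * (Gamma a * n.factorial) := by
      rw [Nat.factorial_succ]; push_cast; ring
    rw [h3]
    have h4 : ((n:ℝ)+1) * (Gamma a * n.factorial) ≤ ((n:ℝ)+1) * Gamma ((n:ℝ)+a) :=
      mul_le_mul_of_nonneg_left ih (by positivity)
    refine h4.trans (mul_le_mul_of_nonneg_right ?_ (Gamma_pos_of_pos h1).le)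
    linarith

private lemma gammaH_ineq (H : ℝ) (hH1 : 1/2 ≤ H) : ∀ k : ℕ,
    (((2*k).factorial : ℝ)) * Gamma H ≤ 4^k * k.factorial * Gamma (k + H) := by
  have hHpos : (0:ℝ) < H := by linarith
  intro k
  induction k with
  | zero => simp
  | succ n ih =>
    have h1 : (0:ℝ) < (n:ℝ) + H := by positivity
    have hG : (0:ℝ) < Gamma ((n:ℝ) + H) := Gamma_pos_of_pos h1
    have e1 : (((2*(n+1)).factorial : ℕ) : ℝ)
        = (2*(n:ℝ)+2) * (2*(n:ℝ)+1) * ((2*n).factorial : ℝ) := by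
      rw [show 2*(n+1) = (2*n+1)+1 by ring, Nat.factorial_succ, Nat.factorial_succ]
      push_cast; ring
    have e2 : Gamma (((n:ℕ)+1 : ℕ) + H) = ((n:ℝ)+H) * Gamma ((n:ℝ)+H) := by
      push_cast
      rw [show (n:ℝ) + 1 + H = ((n:ℝ)+H) + 1 by ring, Real.Gamma_add_one h1.ne']
    have e3 : (((n+1).factorial : ℕ) : ℝ) = ((n:ℝ)+1) * (n.factorial : ℝ) := by
      rw [Nat.factorial_succ]; push_cast; ring
    rw [e1, e2, e3]
    have key : (2*(n:ℝ)+2) * (2*(n:ℝ)+1) ≤ 4 * (((n:ℝ)+1) * ((n:ℝ)+H)) := by nlinarith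
    calc (2*(n:ℝ)+2) * (2*(n:ℝ)+1) * ((2*n).factorial : ℝ) * Gamma H
        = (2*(n:ℝ)+2) * (2*(n:ℝ)+1) * (((2*n).factorial : ℝ) * Gamma H) := by ring
      _ ≤ (2*(n:ℝ)+2) * (2*(n:ℝ)+1) * (4^n * n.factorial * Gamma ((n:ℝ)+H)) := by
          apply mul_le_mul_of_nonneg_left ih (by positivity)
      _ ≤ 4 * (((n:ℝ)+1) * ((n:ℝ)+H)) * (4^n * n.factorial * Gamma ((n:ℝ)+H)) := by
          apply mul_le_mul_of_nonneg_right key (by positivity)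
      _ = 4^(n+1) * (((n:ℝ)+1) * (n.factorial:ℝ)) * (((n:ℝ)+H) * Gamma ((n:ℝ)+H)) := by ring


private lemma central_sq : ∀ k : ℕ,
    (((2*k).factorial : ℝ))^2 * (3*(k:ℝ)+1) ≤ 16^k * ((k.factorial : ℝ))^4 := by
  intro k
  induction k with
  | zero => norm_num
  | succ n ih =>
    have e1 : (((2*(n+1)).factorial : ℕ) : ℝ)
        = (2*(n:ℝ)+2) * (2*(n:ℝ)+1) * ((2*n).factorial : ℝ) := by
      rw [show 2*(n+1) = (2*n+1)+1 by ring, Nat.factorial_succ, Nat.factorial_succ]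
      push_cast; ring
    have e3 : (((n+1).factorial : ℕ) : ℝ) = ((n:ℝ)+1) * (n.factorial : ℝ) := by
      rw [Nat.factorial_succ]; push_cast; ring
    have hpos : (0:ℝ) < 3*(n:ℝ)+1 := by positivity
    push_cast
    refine le_of_mul_le_mul_right ?_ hpos
    have poly : ((2*(n:ℝ)+2) * (2*(n:ℝ)+1))^2 * (3*((n:ℝ)+1)+1)
        ≤ 16 * ((n:ℝ)+1)^4 * (3*(n:ℝ)+1) := by nlinarith [sq_nonneg ((n:ℝ))]
    have h2 : (0:ℝ) ≤ ((2*(n:ℝ)+2) * (2*(n:ℝ)+1))^2 * (3*((n:ℝ)+1)+1) := by positivity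
    calc (((2*(n+1)).factorial : ℝ))^2 * (3*((n:ℝ)+1)+1) * (3*(n:ℝ)+1)
        = ((2*(n:ℝ)+2) * (2*(n:ℝ)+1))^2 * (3*((n:ℝ)+1)+1)
            * (((2*n).factorial : ℝ)^2 * (3*(n:ℝ)+1)) := by rw [e1]; push_cast; ring
      _ ≤ ((2*(n:ℝ)+2) * (2*(n:ℝ)+1))^2 * (3*((n:ℝ)+1)+1) * (16^n * ((n.factorial : ℝ))^4) := by
          apply mul_le_mul_of_nonneg_left ih h2
      _ ≤ 16 * ((n:ℝ)+1)^4 * (3*(n:ℝ)+1) * (16^n * ((n.factorial : ℝ))^4) := by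
          apply mul_le_mul_of_nonneg_right poly (by positivity)
      _ = 16^(n+1) * (((n+1).factorial : ℝ))^4 * (3*(n:ℝ)+1) := by rw [e3]; push_cast; ring

private lemma central_sqrt (m : ℕ) :
    (((2*(m+1)).factorial : ℕ) : ℝ)
      ≤ Real.sqrt ((m:ℝ)+1) * 4^(m+1) * ((m+1).factorial : ℝ) * (m.factorial : ℝ) := by
  have h3 := central_sq (m+1)
  have e3 : (((m+1).factorial : ℕ) : ℝ) = ((m:ℝ)+1) * (m.factorial : ℝ) := by
    rw [Nat.factorial_succ]; push_cast; ring
  have hsq : (Real.sqrt ((m:ℝ)+1))^2 = (m:ℝ)+1 := Real.sq_sqrt (by positivity)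
  have h16 : ((4:ℝ)^(m+1))^2 = 16^(m+1) := by
    rw [← pow_mul, mul_comm (m+1) 2, pow_mul]; norm_num
  set a : ℝ := (((2*(m+1)).factorial : ℕ) : ℝ) with ha
  set F : ℝ := (((m+1).factorial : ℕ) : ℝ) with hF
  set M : ℝ := ((m.factorial : ℕ) : ℝ) with hM
  have key : a^2 ≤ (Real.sqrt ((m:ℝ)+1) * 4^(m+1) * F * M)^2 := by
    have expand : (Real.sqrt ((m:ℝ)+1) * 4^(m+1) * F * M)^2
        = ((m:ℝ)+1) * (16^(m+1) * F^2 * M^2) := by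
      rw [mul_pow, mul_pow, mul_pow, hsq, h16]; ring
    rw [expand]
    have h3' : a^2 * (3*(m:ℝ)+4) ≤ 16^(m+1) * F^4 := by
      have : (3*((m:ℝ)+1)+1) = 3*(m:ℝ)+4 := by ring
      calc a^2 * (3*(m:ℝ)+4) = a^2 * (3*(((m+1):ℕ):ℝ)+1) := by push_cast; ring
        _ ≤ 16^(m+1) * F^4 := h3
    have hF4 : (16:ℝ)^(m+1) * F^4 = ((m:ℝ)+1)^2 * (16^(m+1) * F^2 * M^2) := by
      rw [e3]; ring
    have hRnn : (0:ℝ) ≤ 16^(m+1) * F^2 * M^2 := by positivity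
    have hmono : ((m:ℝ)+1)^2 * (16^(m+1) * F^2 * M^2)
        ≤ (((m:ℝ)+1) * (3*(m:ℝ)+4)) * (16^(m+1) * F^2 * M^2) := by
      apply mul_le_mul_of_nonneg_right (by nlinarith [Nat.cast_nonneg (α := ℝ) m]) hRnn
    have hfin : a^2 * (3*(m:ℝ)+4) ≤ (((m:ℝ)+1) * (16^(m+1) * F^2 * M^2)) * (3*(m:ℝ)+4) := by
      calc a^2 * (3*(m:ℝ)+4) ≤ 16^(m+1) * F^4 := h3'
        _ = ((m:ℝ)+1)^2 * (16^(m+1) * F^2 * M^2) := hF4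
        _ ≤ (((m:ℝ)+1) * (3*(m:ℝ)+4)) * (16^(m+1) * F^2 * M^2) := hmono
        _ = (((m:ℝ)+1) * (16^(m+1) * F^2 * M^2)) * (3*(m:ℝ)+4) := by ring
    exact le_of_mul_le_mul_right hfin (by positivity)
  calc a = Real.sqrt (a^2) := by rw [Real.sqrt_sq (by positivity)]
    _ ≤ Real.sqrt ((Real.sqrt ((m:ℝ)+1) * 4^(m+1) * F * M)^2) := Real.sqrt_le_sqrt key
    _ = _ := Real.sqrt_sq (by positivity)

private lemma exp_eq_tsum' (x : ℝ) : Real.exp x = ∑' n : ℕ, x^n / n.factorial := by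
  rw [Real.exp_eq_exp_ℝ, NormedSpace.exp_eq_tsum_div]

private lemma summable_even (x : ℝ) (hx : 0 ≤ x) :
    Summable (fun k : ℕ => x^(2*k) / ((2*k).factorial : ℝ)) := by
  refine Summable.of_nonneg_of_le (fun k => by positivity) (fun k => ?_)
    (Real.summable_pow_div_factorial (x^2))
  rw [pow_mul, div_le_div_iff₀ (by positivity) (by positivity)]
  have h := Nat.factorial_le (show k ≤ 2*k by omega)
  exact mul_le_mul_of_nonneg_left (by exact_mod_cast h) (by positivity)

private lemma summable_odd (x : ℝ) (hx : 0 ≤ x) :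
    Summable (fun k : ℕ => x^(2*k+1) / ((2*k+1).factorial : ℝ)) := by
  refine Summable.of_nonneg_of_le (fun k => by positivity) (fun k => ?_)
    ((Real.summable_pow_div_factorial (x^2)).mul_left x)
  have : x^(2*k+1) = x * (x^2)^k := by rw [pow_succ, pow_mul]; ring
  rw [this, mul_div_assoc]
  refine mul_le_mul_of_nonneg_left ?_ hx
  rw [div_le_div_iff₀ (by positivity) (by positivity)]
  have h := Nat.factorial_le (show k ≤ 2*k+1 by omega)
  exact mul_le_mul_of_nonneg_left (by exact_mod_cast h) (by positivity)

private lemma tsum_even_le (x : ℝ) (hx : 0 ≤ x) :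
    (∑' k : ℕ, x^(2*k) / ((2*k).factorial : ℝ)) ≤ Real.exp x := by
  rw [exp_eq_tsum' x]
  exact Summable.tsum_le_tsum_of_inj (fun k => 2*k) (fun a b h => by dsimp at h; omega)
    (fun c _ => by positivity) (fun k => le_rfl) (summable_even x hx)
    (Real.summable_pow_div_factorial x)

private lemma tsum_odd_le (x : ℝ) (hx : 0 ≤ x) :
    (∑' k : ℕ, x^(2*k+1) / ((2*k+1).factorial : ℝ)) ≤ Real.exp x := by
  rw [exp_eq_tsum' x]
  exact Summable.tsum_le_tsum_of_inj (fun k => 2*k+1) (fun a b h => by dsimp at h; omega)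
    (fun c _ => by positivity) (fun k => le_rfl) (summable_odd x hx)
    (Real.summable_pow_div_factorial x)

private lemma kfact_le (k : ℕ) : (k:ℝ) * k.factorial ≤ ((2*k).factorial : ℝ) := by
  rcases Nat.eq_zero_or_pos k with h | h
  · subst h; norm_num
  · have h1 : (k+1) * k.factorial ≤ (2*k).factorial := by
      rw [← Nat.factorial_succ]
      exact Nat.factorial_le (by omega)
    calc (k:ℝ) * k.factorial ≤ ((k:ℝ)+1) * k.factorial := by
          apply mul_le_mul_of_nonneg_right (by linarith) (by positivity)
      _ ≤ ((2*k).factorial : ℝ) := by exact_mod_cast h1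

private lemma summable_keven (x : ℝ) (hx : 0 ≤ x) :
    Summable (fun k : ℕ => (k:ℝ) * x^(2*k) / ((2*k).factorial : ℝ)) := by
  refine Summable.of_nonneg_of_le (fun k => by positivity) (fun k => ?_)
    (Real.summable_pow_div_factorial (x^2))
  rw [pow_mul]
  rw [div_le_div_iff₀ (by positivity) (by positivity)]
  calc (k:ℝ) * (x^2)^k * k.factorial = (x^2)^k * ((k:ℝ) * k.factorial) := by ring
    _ ≤ (x^2)^k * ((2*k).factorial : ℝ) := by
        apply mul_le_mul_of_nonneg_left (kfact_le k) (by positivity)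
    _ = (x^2)^k * ((2*k).factorial : ℝ) := rfl

private lemma tsum_keven_le (x : ℝ) (hx : 0 ≤ x) :
    (∑' k : ℕ, (k:ℝ) * x^(2*k) / ((2*k).factorial : ℝ)) ≤ x/2 * Real.exp x := by
  have hsum := summable_keven x hx
  rw [Summable.tsum_eq_zero_add hsum]
  have h0 : ((0:ℕ):ℝ) * x^(2*0) / ((2*0).factorial : ℝ) = 0 := by norm_num
  rw [h0, zero_add]
  have hcong : ∀ k : ℕ, ((k+1:ℕ):ℝ) * x^(2*(k+1)) / ((2*(k+1)).factorial : ℝ)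
      = (x/2) * (x^(2*k+1) / ((2*k+1).factorial : ℝ)) := by
    intro k
    have e1 : (((2*(k+1)).factorial : ℕ) : ℝ) = (2*(k:ℝ)+2) * ((2*k+1).factorial : ℝ) := by
      rw [show 2*(k+1) = (2*k+1)+1 by ring, Nat.factorial_succ]; push_cast; ring
    have e2 : x^(2*(k+1)) = x^(2*k+1) * x := by rw [← pow_succ]; ring_nf
    rw [e1, e2]
    have hf : ((2*k+1).factorial : ℝ) ≠ 0 := by positivity
    field_simp
    push_cast
    ring
  calc (∑' k : ℕ, ((k+1:ℕ):ℝ) * x^(2*(k+1)) / ((2*(k+1)).factorial : ℝ))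
      = ∑' k : ℕ, (x/2) * (x^(2*k+1) / ((2*k+1).factorial : ℝ)) := tsum_congr hcong
    _ = (x/2) * ∑' k : ℕ, x^(2*k+1) / ((2*k+1).factorial : ℝ) := tsum_mul_left
    _ ≤ (x/2) * Real.exp x := by
        apply mul_le_mul_of_nonneg_left (tsum_odd_le x hx) (by positivity)

private lemma summable_sqrt_even (x : ℝ) (hx : 0 < x) :
    Summable (fun k : ℕ => Real.sqrt k * x^(2*k) / ((2*k).factorial : ℝ)) := by
  refine Summable.of_nonneg_of_le (fun k => by positivity) (fun k => ?_)
    (summable_keven x hx.le)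
  have hk : Real.sqrt k ≤ (k:ℝ) := by
    rcases Nat.eq_zero_or_pos k with h | h
    · subst h; simp
    · have h1 : (1:ℝ) ≤ (k:ℝ) := by exact_mod_cast h
      calc Real.sqrt k ≤ Real.sqrt ((k:ℝ)^2) := Real.sqrt_le_sqrt (by nlinarith)
        _ = (k:ℝ) := Real.sqrt_sq (by positivity)
  rw [div_le_div_iff₀ (by positivity) (by positivity)]
  have hxp : (0:ℝ) ≤ x^(2*k) := by positivity
  exact mul_le_mul_of_nonneg_right (mul_le_mul_of_nonneg_right hk hxp) (by positivity)

private lemma tsum_sqrt_even_le (x : ℝ) (hx : 0 < x) :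
    (∑' k : ℕ, Real.sqrt k * x^(2*k) / ((2*k).factorial : ℝ))
      ≤ 3/4 * Real.sqrt x * Real.exp x := by
  have hs : 0 < Real.sqrt x := Real.sqrt_pos.mpr hx
  have hxs : Real.sqrt x * Real.sqrt x = x := Real.mul_self_sqrt hx.le
  have hpt : ∀ k : ℕ, Real.sqrt k * x^(2*k) / ((2*k).factorial : ℝ)
      ≤ (1/(2*Real.sqrt x)) * ((k:ℝ) * x^(2*k) / ((2*k).factorial : ℝ))
        + (Real.sqrt x/2) * (x^(2*k) / ((2*k).factorial : ℝ)) := by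
    intro k
    have hknn : (0:ℝ) ≤ (k:ℝ) := Nat.cast_nonneg k
    have hk : Real.sqrt k ≤ (1/(2*Real.sqrt x)) * k + Real.sqrt x / 2 := by
      rw [show (1/(2*Real.sqrt x)) * k + Real.sqrt x / 2
          = ((k:ℝ) + Real.sqrt x * Real.sqrt x) / (2 * Real.sqrt x) by
            field_simp,
        le_div_iff₀ (by positivity)]
      nlinarith [sq_nonneg (Real.sqrt k - Real.sqrt x), Real.sq_sqrt hknn]
    have ht : (0:ℝ) ≤ x^(2*k) / ((2*k).factorial : ℝ) := by positivity
    calc Real.sqrt k * x^(2*k) / ((2*k).factorial : ℝ)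
        = Real.sqrt k * (x^(2*k) / ((2*k).factorial : ℝ)) := by ring
      _ ≤ ((1/(2*Real.sqrt x)) * k + Real.sqrt x / 2) * (x^(2*k) / ((2*k).factorial : ℝ)) :=
          mul_le_mul_of_nonneg_right hk ht
      _ = (1/(2*Real.sqrt x)) * ((k:ℝ) * x^(2*k) / ((2*k).factorial : ℝ))
        + (Real.sqrt x/2) * (x^(2*k) / ((2*k).factorial : ℝ)) := by ring
  have hsum1 := summable_keven x hx.le
  have hsum2 := summable_even x hx.le
  have hmaj := (hsum1.mul_left (1/(2*Real.sqrt x))).add (hsum2.mul_left (Real.sqrt x/2))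
  have hsl := summable_sqrt_even x hx
  calc (∑' k : ℕ, Real.sqrt k * x^(2*k) / ((2*k).factorial : ℝ))
      ≤ ∑' k : ℕ, ((1/(2*Real.sqrt x)) * ((k:ℝ) * x^(2*k) / ((2*k).factorial : ℝ))
        + (Real.sqrt x/2) * (x^(2*k) / ((2*k).factorial : ℝ))) := Summable.tsum_le_tsum hpt hsl hmaj
    _ = (1/(2*Real.sqrt x)) * (∑' k : ℕ, (k:ℝ) * x^(2*k) / ((2*k).factorial : ℝ))
        + (Real.sqrt x/2) * (∑' k : ℕ, x^(2*k) / ((2*k).factorial : ℝ)) := by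
        rw [Summable.tsum_add (hsum1.mul_left _) (hsum2.mul_left _), tsum_mul_left, tsum_mul_left]
    _ ≤ (1/(2*Real.sqrt x)) * (x/2 * Real.exp x) + (Real.sqrt x/2) * Real.exp x := by
        have b1 := tsum_keven_le x hx.le
        have b2 := tsum_even_le x hx.le
        have n1 : (0:ℝ) ≤ 1/(2*Real.sqrt x) := by positivity
        have n2 : (0:ℝ) ≤ Real.sqrt x/2 := by positivity
        exact add_le_add (mul_le_mul_of_nonneg_left b1 n1) (mul_le_mul_of_nonneg_left b2 n2)
    _ = 3/4 * Real.sqrt x * Real.exp x := by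
        field_simp
        ring_nf
        nlinarith [hxs, Real.exp_pos x]

private lemma besselI_term_rw (p x : ℝ) (hx : 0 < x) (k : ℕ) :
    (x / 2) ^ (2 * (k : ℝ) + p) = (x/2)^(p:ℝ) * (x^(2*k) / 4^k) := by
  have h2 : (0:ℝ) < x/2 := by linarith
  rw [show 2 * (k:ℝ) + p = p + ((2*k : ℕ) : ℝ) by push_cast; ring,
    Real.rpow_add h2, Real.rpow_natCast]
  congr 1
  rw [div_pow, show (2:ℝ)^(2*k) = 4^k by rw [pow_mul]; norm_num]

private lemma besselI_summable (p x : ℝ) (hp : -1 < p) (hx : 0 < x) :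
    Summable (fun k : ℕ =>
      (x / 2) ^ (2 * (k : ℝ) + p) / ((k.factorial : ℝ) * Real.Gamma ((k : ℝ) + p + 1))) := by
  rw [← summable_nat_add_iff 1]
  have h2 : (0:ℝ) < x/2 := by linarith
  have hGp : (0:ℝ) < Gamma (p+2) := Gamma_pos_of_pos (by linarith)
  refine Summable.of_nonneg_of_le (fun k => ?_) (fun k => ?_)
    ((Real.summable_pow_div_factorial ((x/2)^2)).mul_left ((x/2)^(p+2:ℝ) / Gamma (p+2)))
  · have hG : (0:ℝ) < Gamma (((k+1:ℕ):ℝ) + p + 1) := Gamma_pos_of_pos (by push_cast; linarith [Nat.cast_nonneg (α:=ℝ) k])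
    positivity
  · have e1 : (x/2) ^ (2 * ((k+1:ℕ) : ℝ) + p) = (x/2)^(p+2:ℝ) * ((x/2)^2)^k := by
      rw [show 2 * ((k+1:ℕ):ℝ) + p = (p+2) + ((2*k : ℕ):ℝ) by push_cast; ring,
        Real.rpow_add h2, Real.rpow_natCast, pow_mul]
    have e2 : Gamma (((k+1:ℕ):ℝ) + p + 1) = Gamma ((k:ℝ) + (p+2)) := by
      push_cast; ring_nf
    have hgam : Gamma (p+2) * k.factorial ≤ Gamma ((k:ℝ) + (p+2)) :=
      fact_le_gamma (p+2) (by linarith) k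
    have hfac : (k.factorial : ℝ) ≤ ((k+1).factorial : ℝ) := by
      exact_mod_cast Nat.factorial_le (Nat.le_succ k)
    have hG : (0:ℝ) < Gamma ((k:ℝ) + (p+2)) :=
      Gamma_pos_of_pos (by linarith [Nat.cast_nonneg (α:=ℝ) k])
    rw [e1, e2, mul_div_assoc, div_mul_div_comm, mul_div_assoc]
    refine mul_le_mul_of_nonneg_left ?_ (by positivity)
    rw [div_le_div_iff₀ (by positivity) (by positivity)]
    calc ((x/2)^2)^k * (Gamma (p+2) * k.factorial)
        ≤ ((x/2)^2)^k * Gamma ((k:ℝ) + (p+2)) := by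
          apply mul_le_mul_of_nonneg_left hgam (by positivity)
      _ ≤ ((x/2)^2)^k * (((k+1).factorial : ℝ) * Gamma ((k:ℝ) + (p+2))) := by
          have h1 : (1:ℝ) ≤ ((k+1).factorial : ℝ) := by
            exact_mod_cast Nat.one_le_iff_ne_zero.mpr (Nat.factorial_ne_zero _)
          exact mul_le_mul_of_nonneg_left (le_mul_of_one_le_left hG.le h1) (by positivity)

private lemma besselI_nonneg (p x : ℝ) (hp : -1 < p) (hx : 0 < x) : 0 ≤ besselI p x := by
  refine tsum_nonneg (fun k => ?_)
  have hG : (0:ℝ) < Gamma ((k:ℝ) + p + 1) :=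
    Gamma_pos_of_pos (by linarith [Nat.cast_nonneg (α:=ℝ) k])
  have hrp : (0:ℝ) ≤ (x/2) ^ (2*(k:ℝ)+p) := Real.rpow_nonneg (by linarith) _
  positivity

private lemma besselI_upper1 (H x : ℝ) (hH1 : 1/2 ≤ H) (hH2 : H ≤ 1) (hx : 0 < x) :
    besselI (H-1) x ≤ (x/2)^(H-1:ℝ) * Real.exp x / Real.Gamma H := by
  have hH0 : (0:ℝ) < H := by linarith
  have hGH : (0:ℝ) < Gamma H := Gamma_pos_of_pos hH0
  have h2 : (0:ℝ) < x/2 := by linarith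
  have hrp : (0:ℝ) ≤ (x/2)^(H-1:ℝ) := Real.rpow_nonneg h2.le _
  have hpt : ∀ k : ℕ, (x / 2) ^ (2 * (k : ℝ) + (H-1)) / ((k.factorial : ℝ) * Gamma ((k : ℝ) + (H-1) + 1))
      ≤ ((x/2)^(H-1:ℝ) / Gamma H) * (x^(2*k) / ((2*k).factorial : ℝ)) := by
    intro k
    have eG : Gamma ((k:ℝ) + (H-1) + 1) = Gamma ((k:ℝ) + H) := by ring_nf
    have hGk : (0:ℝ) < Gamma ((k:ℝ) + H) :=
      Gamma_pos_of_pos (by linarith [Nat.cast_nonneg (α:=ℝ) k])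
    rw [besselI_term_rw (H-1) x hx k, eG]
    rw [show (x/2)^(H-1:ℝ) * (x^(2*k)/4^k) / ((k.factorial:ℝ) * Gamma ((k:ℝ)+H))
        = (x/2)^(H-1:ℝ) * (x^(2*k) / (4^k * ((k.factorial:ℝ) * Gamma ((k:ℝ)+H)))) by ring,
      show (x/2)^(H-1:ℝ) / Gamma H * (x^(2*k) / ((2*k).factorial : ℝ))
        = (x/2)^(H-1:ℝ) * (x^(2*k) / (Gamma H * ((2*k).factorial : ℝ))) by ring]
    refine mul_le_mul_of_nonneg_left ?_ hrp
    rw [div_le_div_iff₀ (by positivity) (by positivity)]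
    calc x^(2*k) * (Gamma H * ((2*k).factorial : ℝ))
        = x^(2*k) * (((2*k).factorial : ℝ) * Gamma H) := by ring
      _ ≤ x^(2*k) * (4^k * k.factorial * Gamma ((k:ℝ)+H)) := by
          apply mul_le_mul_of_nonneg_left (gammaH_ineq H hH1 k) (by positivity)
      _ = x^(2*k) * (4^k * ((k.factorial:ℝ) * Gamma ((k:ℝ)+H))) := by ring
  have hmaj : Summable (fun k : ℕ => ((x/2)^(H-1:ℝ) / Gamma H) * (x^(2*k) / ((2*k).factorial : ℝ))) :=
    (summable_even x hx.le).mul_left _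
  calc besselI (H-1) x
      ≤ ∑' k : ℕ, ((x/2)^(H-1:ℝ) / Gamma H) * (x^(2*k) / ((2*k).factorial : ℝ)) :=
        Summable.tsum_le_tsum hpt (besselI_summable (H-1) x (by linarith) hx) hmaj
    _ = ((x/2)^(H-1:ℝ) / Gamma H) * ∑' k : ℕ, x^(2*k) / ((2*k).factorial : ℝ) := tsum_mul_left
    _ ≤ ((x/2)^(H-1:ℝ) / Gamma H) * Real.exp x := by
        apply mul_le_mul_of_nonneg_left (tsum_even_le x hx.le) (by positivity)
    _ = (x/2)^(H-1:ℝ) * Real.exp x / Gamma H := by ring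

private lemma besselI_upper2 (H x : ℝ) (hH1 : 1/2 ≤ H) (hH2 : H < 1) (hx : 0 < x) :
    besselI (-H) x ≤ (x/2)^(-H:ℝ) *
      (1/Real.Gamma (1-H) + 3/4 * Real.sqrt x * Real.exp x / Real.Gamma (2-H)) := by
  have hH0 : (0:ℝ) < H := by linarith
  have h2 : (0:ℝ) < x/2 := by linarith
  have hG1 : (0:ℝ) < Gamma (1-H) := Gamma_pos_of_pos (by linarith)
  have hG2 : (0:ℝ) < Gamma (2-H) := Gamma_pos_of_pos (by linarith)
  have hrp : (0:ℝ) ≤ (x/2)^(-H:ℝ) := Real.rpow_nonneg h2.le _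
  have hsummable := besselI_summable (-H) x (by linarith) hx
  have hbes : besselI (-H) x = (x/2)^(2*((0:ℕ):ℝ) + (-H)) / (((0:ℕ).factorial : ℝ) * Gamma (((0:ℕ):ℝ) + (-H) + 1))
      + ∑' k : ℕ, (x/2)^(2*((k+1:ℕ):ℝ) + (-H)) / (((k+1).factorial : ℝ) * Gamma (((k+1:ℕ):ℝ) + (-H) + 1)) := by
    exact Summable.tsum_eq_zero_add hsummable
  have h0 : (x/2)^(2*((0:ℕ):ℝ) + (-H)) / (((0:ℕ).factorial : ℝ) * Gamma (((0:ℕ):ℝ) + (-H) + 1))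
      = (x/2)^(-H:ℝ) * (1/Gamma (1-H)) := by
    norm_num
    rw [show (-H:ℝ) + 1 = 1 - H by ring, div_eq_mul_inv]
  have hpt : ∀ k : ℕ, (x/2)^(2*((k+1:ℕ):ℝ) + (-H)) / (((k+1).factorial : ℝ) * Gamma (((k+1:ℕ):ℝ) + (-H) + 1))
      ≤ ((x/2)^(-H:ℝ) / Gamma (2-H)) * (Real.sqrt ((k+1:ℕ):ℝ) * x^(2*(k+1)) / ((2*(k+1)).factorial : ℝ)) := by
    intro k
    have eG : Gamma (((k+1:ℕ):ℝ) + (-H) + 1) = Gamma ((k:ℝ) + (2-H)) := by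
      push_cast; ring_nf
    have hGk : (0:ℝ) < Gamma ((k:ℝ) + (2-H)) :=
      Gamma_pos_of_pos (by linarith [Nat.cast_nonneg (α:=ℝ) k])
    have hgam : Gamma (2-H) * k.factorial ≤ Gamma ((k:ℝ) + (2-H)) :=
      fact_le_gamma (2-H) (by linarith) k
    rw [besselI_term_rw (-H) x hx (k+1), eG]
    rw [show (x/2)^(-H:ℝ) * (x^(2*(k+1))/4^(k+1)) / (((k+1).factorial:ℝ) * Gamma ((k:ℝ)+(2-H)))
        = (x/2)^(-H:ℝ) * (x^(2*(k+1)) / (4^(k+1) * (((k+1).factorial:ℝ) * Gamma ((k:ℝ)+(2-H))))) by ring,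
      show (x/2)^(-H:ℝ) / Gamma (2-H) * (Real.sqrt ((k+1:ℕ):ℝ) * x^(2*(k+1)) / ((2*(k+1)).factorial : ℝ))
        = (x/2)^(-H:ℝ) * (Real.sqrt ((k+1:ℕ):ℝ) * x^(2*(k+1)) / (Gamma (2-H) * ((2*(k+1)).factorial : ℝ))) by ring]
    refine mul_le_mul_of_nonneg_left ?_ hrp
    rw [div_le_div_iff₀ (by positivity) (by positivity)]
    have hc := central_sqrt k
    have hsq : (0:ℝ) ≤ Real.sqrt ((k:ℝ)+1) := Real.sqrt_nonneg _
    calc x^(2*(k+1)) * (Gamma (2-H) * ((2*(k+1)).factorial : ℝ))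
        ≤ x^(2*(k+1)) * (Gamma (2-H) * (Real.sqrt ((k:ℝ)+1) * 4^(k+1) * ((k+1).factorial : ℝ) * (k.factorial : ℝ))) := by
          refine mul_le_mul_of_nonneg_left (mul_le_mul_of_nonneg_left hc hG2.le) (by positivity)
      _ = Real.sqrt ((k:ℝ)+1) * x^(2*(k+1)) * (4^(k+1) * (((k+1).factorial : ℝ) * (Gamma (2-H) * (k.factorial : ℝ)))) := by ring
      _ ≤ Real.sqrt ((k:ℝ)+1) * x^(2*(k+1)) * (4^(k+1) * (((k+1).factorial : ℝ) * Gamma ((k:ℝ) + (2-H)))) := by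
          refine mul_le_mul_of_nonneg_left ?_ (by positivity)
          refine mul_le_mul_of_nonneg_left (mul_le_mul_of_nonneg_left hgam ?_) (by positivity)
          positivity
      _ = Real.sqrt (((k+1:ℕ):ℝ)) * x^(2*(k+1)) * (4^(k+1) * (((k+1).factorial : ℝ) * Gamma ((k:ℝ) + (2-H)))) := by push_cast; ring
  have hmaj : Summable (fun k : ℕ => ((x/2)^(-H:ℝ) / Gamma (2-H)) *
      (Real.sqrt ((k+1:ℕ):ℝ) * x^(2*(k+1)) / ((2*(k+1)).factorial : ℝ))) := by
    refine Summable.mul_left _ ?_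
    have := (summable_nat_add_iff 1).mpr (summable_sqrt_even x hx)
    exact this.congr (fun k => by push_cast; ring_nf)
  have htail : (∑' k : ℕ, (x/2)^(2*((k+1:ℕ):ℝ) + (-H)) / (((k+1).factorial : ℝ) * Gamma (((k+1:ℕ):ℝ) + (-H) + 1)))
      ≤ ((x/2)^(-H:ℝ) / Gamma (2-H)) * (3/4 * Real.sqrt x * Real.exp x) := by
    calc (∑' k : ℕ, (x/2)^(2*((k+1:ℕ):ℝ) + (-H)) / (((k+1).factorial : ℝ) * Gamma (((k+1:ℕ):ℝ) + (-H) + 1)))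
        ≤ ∑' k : ℕ, ((x/2)^(-H:ℝ) / Gamma (2-H)) *
            (Real.sqrt ((k+1:ℕ):ℝ) * x^(2*(k+1)) / ((2*(k+1)).factorial : ℝ)) := by
          refine Summable.tsum_le_tsum hpt ?_ hmaj
          exact (summable_nat_add_iff 1).mpr hsummable
      _ = ((x/2)^(-H:ℝ) / Gamma (2-H)) * ∑' k : ℕ,
            (Real.sqrt ((k+1:ℕ):ℝ) * x^(2*(k+1)) / ((2*(k+1)).factorial : ℝ)) := tsum_mul_left
      _ ≤ ((x/2)^(-H:ℝ) / Gamma (2-H)) * (3/4 * Real.sqrt x * Real.exp x) := by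
          refine mul_le_mul_of_nonneg_left ?_ (by positivity)
          calc (∑' k : ℕ, (Real.sqrt ((k+1:ℕ):ℝ) * x^(2*(k+1)) / ((2*(k+1)).factorial : ℝ)))
              ≤ ∑' m : ℕ, Real.sqrt (m:ℝ) * x^(2*m) / ((2*m).factorial : ℝ) := by
                refine Summable.tsum_le_tsum_of_inj (fun k => k+1) (fun a b h => by dsimp at h; omega)
                  (fun c _ => by positivity) (fun k => le_rfl) ?_ (summable_sqrt_even x hx)
                exact ((summable_nat_add_iff 1).mpr (summable_sqrt_even x hx)).congr
                  (fun k => by push_cast; ring_nf)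
            _ ≤ 3/4 * Real.sqrt x * Real.exp x := tsum_sqrt_even_le x hx
  rw [hbes, h0]
  calc (x/2)^(-H:ℝ) * (1/Gamma (1-H)) + _ ≤ (x/2)^(-H:ℝ) * (1/Gamma (1-H))
      + ((x/2)^(-H:ℝ) / Gamma (2-H)) * (3/4 * Real.sqrt x * Real.exp x) := by
        exact add_le_add_right htail _
    _ = (x/2)^(-H:ℝ) * (1/Gamma (1-H) + 3/4 * Real.sqrt x * Real.exp x / Gamma (2-H)) := by ring

private lemma prod_div_exp_le (H x : ℝ) (hH1 : 1/2 ≤ H) (hH2 : H < 1) (hx : 0 < x) :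
    besselI (H-1) x * besselI (-H) x / Real.exp (2*x)
      ≤ (2 / (Gamma H * Gamma (1-H))) * (Real.exp (-x) / x)
        + (3 / (2 * (Gamma H * Gamma (2-H)))) * (1 / Real.sqrt x) := by
  have hH0 : (0:ℝ) < H := by linarith
  have h2 : (0:ℝ) < x/2 := by linarith
  have hGH : (0:ℝ) < Gamma H := Gamma_pos_of_pos hH0
  have hG1 : (0:ℝ) < Gamma (1-H) := Gamma_pos_of_pos (by linarith)
  have hG2 : (0:ℝ) < Gamma (2-H) := Gamma_pos_of_pos (by linarith)
  have hu1 := besselI_upper1 H x hH1 hH2.le hx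
  have hu2 := besselI_upper2 H x hH1 hH2 hx
  have hn1 : 0 ≤ besselI (H-1) x := besselI_nonneg (H-1) x (by linarith) hx
  have hn2 : 0 ≤ besselI (-H) x := besselI_nonneg (-H) x (by linarith) hx
  have hU1nn : 0 ≤ (x/2)^(H-1:ℝ) * Real.exp x / Gamma H := by
    have := Real.rpow_nonneg h2.le (H-1)
    positivity
  have key : besselI (H-1) x * besselI (-H) x
      ≤ ((x/2)^(H-1:ℝ) * Real.exp x / Gamma H) * ((x/2)^(-H:ℝ) *
        (1/Gamma (1-H) + 3/4 * Real.sqrt x * Real.exp x / Gamma (2-H))) :=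
    mul_le_mul hu1 hu2 hn2 hU1nn
  have hE : (0:ℝ) < Real.exp (2*x) := Real.exp_pos _
  have step1 : besselI (H-1) x * besselI (-H) x / Real.exp (2*x)
      ≤ ((x/2)^(H-1:ℝ) * Real.exp x / Gamma H) * ((x/2)^(-H:ℝ) *
        (1/Gamma (1-H) + 3/4 * Real.sqrt x * Real.exp x / Gamma (2-H))) / Real.exp (2*x) :=
    div_le_div_of_nonneg_right key hE.le
  refine step1.trans (le_of_eq ?_)
  have hpow : (x/2)^(H-1:ℝ) * (x/2)^(-H:ℝ) = 2/x := by
    rw [← Real.rpow_add h2, show H-1+(-H) = (-1:ℝ) by ring, Real.rpow_neg_one, inv_div]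
  have hexp2 : Real.exp (2*x) = Real.exp x * Real.exp x := by
    rw [← Real.exp_add]; ring_nf
  have hsx : Real.sqrt x * Real.sqrt x = x := Real.mul_self_sqrt hx.le
  have hs : (0:ℝ) < Real.sqrt x := Real.sqrt_pos.mpr hx
  have hEx : Real.exp x ≠ 0 := (Real.exp_pos x).ne'
  have hen : Real.exp (-x) = (Real.exp x)⁻¹ := Real.exp_neg x
  calc ((x/2)^(H-1:ℝ) * Real.exp x / Gamma H) * ((x/2)^(-H:ℝ) *
        (1/Gamma (1-H) + 3/4 * Real.sqrt x * Real.exp x / Gamma (2-H))) / Real.exp (2*x)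
      = ((x/2)^(H-1:ℝ) * (x/2)^(-H:ℝ)) * (Real.exp x *
        (1/Gamma (1-H) + 3/4 * Real.sqrt x * Real.exp x / Gamma (2-H))
          / (Gamma H * (Real.exp x * Real.exp x))) := by rw [hexp2]; ring
    _ = (2/x) * (Real.exp x * (1/Gamma (1-H) + 3/4 * Real.sqrt x * Real.exp x / Gamma (2-H))
          / (Gamma H * (Real.exp x * Real.exp x))) := by rw [hpow]
    _ = (2 / (Gamma H * Gamma (1-H))) * (Real.exp (-x) / x)
        + (3 / (2 * (Gamma H * Gamma (2-H)))) * (1 / Real.sqrt x) := by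
        rw [hen]
        field_simp
        linear_combination (12 * Real.exp x * Gamma (1-H)) * hsx

private lemma tendsto_sqrt_atTop' : Tendsto Real.sqrt atTop atTop := by
  rw [tendsto_atTop_atTop]
  intro b
  refine ⟨b^2, fun a ha => ?_⟩
  calc b ≤ |b| := le_abs_self b
    _ = Real.sqrt (b^2) := (Real.sqrt_sq_eq_abs b).symm
    _ ≤ Real.sqrt a := Real.sqrt_le_sqrt ha

private lemma bessel_prod_tendsto (H T : ℝ) (hH1 : 1/2 ≤ H) (hH2 : H < 1) (hT : 0 < T) :
    Tendsto (fun μ : ℝ => besselI (H-1) (μ*T/2) * besselI (-H) (μ*T/2) / Real.exp (μ*T))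
      atTop (nhds 0) := by
  have hH0 : (0:ℝ) < H := by linarith
  have hGH : (0:ℝ) < Gamma H := Gamma_pos_of_pos hH0
  have hG1 : (0:ℝ) < Gamma (1-H) := Gamma_pos_of_pos (by linarith)
  have hG2 : (0:ℝ) < Gamma (2-H) := Gamma_pos_of_pos (by linarith)
  have hxt : Tendsto (fun μ : ℝ => μ*T/2) atTop atTop := by
    have := tendsto_id.atTop_mul_const (show (0:ℝ) < T/2 by positivity)
    exact this.congr (fun μ => by simp only [id_eq]; ring)
  have hup : Tendsto (fun μ : ℝ =>
      (2 / (Gamma H * Gamma (1-H))) * (Real.exp (-(μ*T/2)) / (μ*T/2))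
        + (3 / (2 * (Gamma H * Gamma (2-H)))) * (1 / Real.sqrt (μ*T/2)))
      atTop (nhds 0) := by
    have p1 : Tendsto (fun y : ℝ => Real.exp (-y) / y) atTop (nhds 0) := by
      have := Real.tendsto_exp_neg_atTop_nhds_zero.mul tendsto_inv_atTop_zero
      simpa [div_eq_mul_inv] using this
    have p2 : Tendsto (fun y : ℝ => 1 / Real.sqrt y) atTop (nhds 0) := by
      have := tendsto_inv_atTop_zero.comp tendsto_sqrt_atTop'
      simpa [one_div, Function.comp_def] using this
    have c1 := (p1.comp hxt).const_mul (2 / (Gamma H * Gamma (1-H)))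
    have c2 := (p2.comp hxt).const_mul (3 / (2 * (Gamma H * Gamma (2-H))))
    have := c1.add c2
    simpa [Function.comp] using this
  refine squeeze_zero' ?_ ?_ hup
  · filter_upwards [eventually_gt_atTop (0:ℝ)] with μ hμ
    have hx : (0:ℝ) < μ*T/2 := by positivity
    have hn1 : 0 ≤ besselI (H-1) (μ*T/2) := besselI_nonneg (H-1) (μ*T/2) (by linarith) hx
    have hn2 : 0 ≤ besselI (-H) (μ*T/2) := besselI_nonneg (-H) (μ*T/2) (by linarith) hx
    positivity
  · filter_upwards [eventually_gt_atTop (0:ℝ)] with μ hμ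
    have hx : (0:ℝ) < μ*T/2 := by positivity
    have h := prod_div_exp_le H (μ*T/2) hH1 hH2 hx
    rwa [show 2*(μ*T/2) = μ*T by ring] at h


end Helpers

/-- Lemma A.1 asymptotics: for `H ∈ [1/2,1)` and `T > 0`,
`μ * (2 + 2e^{μT}(1-μT) - (πμT/sin(πH)) I_{H-1}(μT/2) I_{-H}(μT/2)) / (4μ²e^{μT}) → -T/2`
as `μ → +∞`. -/
theorem laplace_transform_derivative_asymptotics (H T : ℝ)
    (hH1 : 1 / 2 ≤ H) (hH2 : H < 1) (hT : 0 < T) :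
    Tendsto
      (fun μ : ℝ => μ *
        ((2 + 2 * Real.exp (μ * T) * (1 - μ * T) -
            Real.pi * μ * T / Real.sin (Real.pi * H) *
              besselI (H - 1) (μ * T / 2) * besselI (-H) (μ * T / 2)) /
          (4 * μ ^ 2 * Real.exp (μ * T))))
      atTop (nhds (-(T / 2))) := by
  have hsin : (0:ℝ) < Real.sin (Real.pi * H) := by
    apply Real.sin_pos_of_pos_of_lt_pi
    · positivity
    · nlinarith [Real.pi_pos]
  have hlim1 : Tendsto (fun μ : ℝ => 1/(2*μ*Real.exp (μ*T))) atTop (nhds 0) := by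
    have h1 : Tendsto (fun μ : ℝ => 2*μ) atTop atTop := by
      have := tendsto_id.const_mul_atTop (show (0:ℝ) < 2 by norm_num)
      simpa using this
    have h2 : Tendsto (fun μ : ℝ => Real.exp (μ*T)) atTop atTop :=
      Real.tendsto_exp_atTop.comp (tendsto_id.atTop_mul_const hT)
    have h3 : Tendsto (fun μ : ℝ => 2*μ*Real.exp (μ*T)) atTop atTop := h1.atTop_mul_atTop₀ h2
    refine (h3.inv_tendsto_atTop).congr (fun μ => ?_)
    simp [Pi.inv_apply, one_div]
  have hlim2 : Tendsto (fun μ : ℝ => 1/(2*μ) - T/2) atTop (nhds (-(T/2))) := by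
    have h1 : Tendsto (fun μ : ℝ => 2*μ) atTop atTop := by
      have := tendsto_id.const_mul_atTop (show (0:ℝ) < 2 by norm_num)
      simpa using this
    have h2 : Tendsto (fun μ : ℝ => 1/(2*μ)) atTop (nhds 0) := by
      refine (h1.inv_tendsto_atTop).congr (fun μ => ?_)
      simp [Pi.inv_apply, one_div]
    have := h2.sub_const (T/2)
    simpa using this
  have hlim3 := (bessel_prod_tendsto H T hH1 hH2 hT).const_mul
    (Real.pi*T/(4*Real.sin (Real.pi*H)))
  have hlim : Tendsto (fun μ : ℝ => 1/(2*μ*Real.exp (μ*T)) + (1/(2*μ) - T/2)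
      - (Real.pi*T/(4*Real.sin (Real.pi*H)))
        * (besselI (H-1) (μ*T/2) * besselI (-H) (μ*T/2) / Real.exp (μ*T)))
      atTop (nhds (-(T/2))) := by
    have := (hlim1.add hlim2).sub hlim3
    simpa using this
  refine Tendsto.congr' ?_ hlim
  filter_upwards [eventually_gt_atTop (0:ℝ)] with μ hμ
  have hE : Real.exp (μ*T) ≠ 0 := (Real.exp_pos _).ne'
  have hμ' : μ ≠ 0 := hμ.ne'
  field_simp
  ring
end
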